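/- arXiv:0903.1999 — 2 statements merged into one kernel-verified Lean document; each statement's English description precedes it below -/
import Mathlib

section
/- For positive integers k and ℓ with 0 ≤ ℓ ≤ k, the number of k-good permutations of length 2k + ℓ is the central binomial coefficient C(2ℓ, ℓ). -/
/-- `π` contains a decreasing subsequence of length `k`.  The `321`-avoiding
permutations (members of `I₂`) are those with `¬ HasDecSeq π 3`. -/
def HasDecSeq {n : ℕ} (π : Equiv.Perm (Fin n)) (k : ℕ) : Prop :=
  ∃ q : Fin k → Fin n, StrictMono q ∧ StrictAnti fun i => π (q i)

/-- `π` is `k`-good: every point of `π` lies in a subset of `π` whose pattern is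
`ι_k ⊖ ι_k`, i.e. an increasing sequence of `k` points (the `u`s) lying entirely
above and to the left of another increasing sequence of `k` points (the `v`s). -/
def KGood (k : ℕ) {n : ℕ} (π : Equiv.Perm (Fin n)) : Prop :=
  ∀ p : Fin n, ∃ u v : Fin k → Fin n,
    StrictMono u ∧ StrictMono v ∧
    (StrictMono fun i => π (u i)) ∧ (StrictMono fun i => π (v i)) ∧
    (∀ i j, u i < v j) ∧ (∀ i j, π (v j) < π (u i)) ∧
    ((∃ i, u i = p) ∨ (∃ j, v j = p))

namespace CKG

open Finset

variable {n : ℕ}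

/-- `x` is an ascent point (strong excedance by at least `k`). -/
def Up (k : ℕ) (π : Equiv.Perm (Fin n)) (x : Fin n) : Prop := (x : ℕ) + k ≤ (π x : ℕ)

/-- `x` is a descent point (strong deficiency by at least `k`). -/
def Dn (k : ℕ) (π : Equiv.Perm (Fin n)) (x : Fin n) : Prop := (π x : ℕ) + k ≤ (x : ℕ)

/-- large displacement everywhere -/
def Disp (k : ℕ) (π : Equiv.Perm (Fin n)) : Prop := ∀ x, Up k π x ∨ Dn k π x

lemma mk3 {π : Equiv.Perm (Fin n)} {x y z : Fin n} (h1 : x < y) (h2 : y < z)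
    (h3 : π y < π x) (h4 : π z < π y) : HasDecSeq π 3 := by
  refine ⟨fun i => if (i : ℕ) = 0 then x else if (i : ℕ) = 1 then y else z, ?_, ?_⟩
  · intro a b hab
    rw [Fin.lt_def] at hab
    have hb := b.isLt
    have hcase : ((a:ℕ) = 0 ∧ (b:ℕ) = 1) ∨ ((a:ℕ) = 0 ∧ (b:ℕ) = 2) ∨
        ((a:ℕ) = 1 ∧ (b:ℕ) = 2) := by omega
    rcases hcase with ⟨ha, hb'⟩ | ⟨ha, hb'⟩ | ⟨ha, hb'⟩ <;> simp [ha, hb'] <;>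
      first
        | exact h1
        | exact h1.trans h2
        | exact h2
  · intro a b hab
    rw [Fin.lt_def] at hab
    have hb := b.isLt
    have hcase : ((a:ℕ) = 0 ∧ (b:ℕ) = 1) ∨ ((a:ℕ) = 0 ∧ (b:ℕ) = 2) ∨
        ((a:ℕ) = 1 ∧ (b:ℕ) = 2) := by omega
    rcases hcase with ⟨ha, hb'⟩ | ⟨ha, hb'⟩ | ⟨ha, hb'⟩ <;> simp [ha, hb'] <;>
      first
        | exact h3
        | exact h4.trans h3
        | exact h4

lemma no321_symm {π : Equiv.Perm (Fin n)} (hav : ¬ HasDecSeq π 3) :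
    ¬ HasDecSeq π.symm 3 := by
  rintro ⟨q, hmono, hanti⟩
  refine hav ⟨fun i => π.symm (q (Fin.rev i)), ?_, ?_⟩
  · intro a b hab
    exact hanti (Fin.rev_lt_rev.mpr hab)
  · intro a b hab
    simp only [Equiv.apply_symm_apply]
    exact hmono (Fin.rev_lt_rev.mpr hab)

lemma no321_mono_up {π : Equiv.Perm (Fin n)} (hav : ¬ HasDecSeq π 3) {x y : Fin n}
    (hxy : x < y) (hx : (x : ℕ) < (π x : ℕ)) (hy : (y : ℕ) < (π y : ℕ)) :
    π x < π y := by
  by_contra h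
  have hne : π y ≠ π x := fun he => absurd (π.injective he) hxy.ne'
  have h2 : π y < π x := lt_of_le_of_ne (not_lt.mp h) hne
  -- find z > y with π z < π y
  have hz : ∃ z, y < z ∧ π z < π y := by
    by_contra hno
    push_neg at hno
    have hsub : (Finset.Iio (π y)).image π.symm ⊆ (Finset.Iio y).erase x := by
      intro w hw
      rcases Finset.mem_image.mp hw with ⟨v, hv, rfl⟩
      have hv' : v < π y := Finset.mem_Iio.mp hv
      have hπw : π (π.symm v) = v := π.apply_symm_apply v
      have hwy : ¬ y < π.symm v := fun hgt => absurd (hπw ▸ hno _ hgt) (not_le.mpr hv')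
      have hwny : π.symm v ≠ y := by
        intro he
        rw [he] at hπw
        exact absurd (hπw ▸ hv') (lt_irrefl _)
      refine Finset.mem_erase.mpr ⟨?_, Finset.mem_Iio.mpr (lt_of_le_of_ne (not_lt.mp hwy) hwny)⟩
      intro he
      rw [he] at hπw
      exact absurd (hπw ▸ hv') (not_lt.mpr h2.le)
    have hc1 : ((Finset.Iio (π y)).image π.symm).card = (π y : ℕ) := by
      rw [Finset.card_image_of_injective _ π.symm.injective, Fin.card_Iio]
    have hc2 : ((Finset.Iio y).erase x).card = (y : ℕ) - 1 := by
      rw [Finset.card_erase_of_mem (Finset.mem_Iio.mpr hxy), Fin.card_Iio]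
    have := Finset.card_le_card hsub
    omega
  obtain ⟨z, hyz, hπz⟩ := hz
  exact hav (mk3 hxy hyz h2 hπz)

lemma no321_mono_dn {π : Equiv.Perm (Fin n)} (hav : ¬ HasDecSeq π 3) {x y : Fin n}
    (hxy : x < y) (hx : (π x : ℕ) < (x : ℕ)) (hy : (π y : ℕ) < (y : ℕ)) :
    π x < π y := by
  by_contra h
  have hne : π y ≠ π x := fun he => absurd (π.injective he) hxy.ne'
  have h2 : π y < π x := lt_of_le_of_ne (not_lt.mp h) hne
  have := no321_mono_up (no321_symm hav) (x := π y) (y := π x) h2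
    (by simpa using hy) (by simpa using hx)
  simp only [Equiv.symm_apply_apply] at this
  exact absurd (hxy.trans this) (lt_irrefl _)

end CKG

section Main

open Finset CKG

variable {k l : ℕ}

/-- the `k`-good ⇒ displacement direction -/
lemma disp_of {k l : ℕ} (hk : 0 < k) {π : Equiv.Perm (Fin (2 * k + l))}
    (hav : ¬ HasDecSeq π 3) (hgood : KGood k π) : Disp k π := by
  intro p
  obtain ⟨u, v, hu, hv, hπu, hπv, huv, hπvu, hmem⟩ := hgood p
  have i0 : Fin k := ⟨0, hk⟩
  rcases hmem with ⟨i, hui⟩ | ⟨j, hvj⟩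
  · left
    have h1 : ∀ x ∈ Finset.Iio p ∪ Finset.image v Finset.univ, π x < π p := by
      intro x hx
      rcases Finset.mem_union.mp hx with hx | hx
      · have hxp : x < p := Finset.mem_Iio.mp hx
        by_contra hcon
        have hne : π x ≠ π p := fun he => absurd (π.injective he) hxp.ne
        have h3 : π p < π x := lt_of_le_of_ne (not_lt.mp hcon) (Ne.symm hne)
        have hpv : p < v i0 := hui ▸ huv i i0
        have h4 : π (v i0) < π p := hui ▸ hπvu i i0
        exact hav (CKG.mk3 hxp hpv h3 h4)
      · rcases Finset.mem_image.mp hx with ⟨j, _, rfl⟩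
        exact hui ▸ hπvu i j
    have hdisj : Disjoint (Finset.Iio p) (Finset.image v Finset.univ) := by
      rw [Finset.disjoint_left]
      intro x hx hx'
      rcases Finset.mem_image.mp hx' with ⟨j, _, rfl⟩
      have hlt : p < v j := hui ▸ huv i j
      exact absurd ((Finset.mem_Iio.mp hx).trans hlt) (lt_irrefl _)
    have hcard : (Finset.Iio p ∪ Finset.image v Finset.univ).card = (p : ℕ) + k := by
      rw [Finset.card_union_of_disjoint hdisj, Fin.card_Iio,
        Finset.card_image_of_injective _ hv.injective, Finset.card_univ, Fintype.card_fin]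
    have hsub : (Finset.Iio p ∪ Finset.image v Finset.univ).image π ⊆ Finset.Iio (π p) := by
      intro y hy
      rcases Finset.mem_image.mp hy with ⟨x, hx, rfl⟩
      exact Finset.mem_Iio.mpr (h1 x hx)
    have hle := Finset.card_le_card hsub
    rw [Finset.card_image_of_injective _ π.injective, hcard, Fin.card_Iio] at hle
    exact hle
  · right
    have h1 : ∀ x ∈ (Finset.Iio (π p)).image π.symm ∪ Finset.image u Finset.univ,
        x < p := by
      intro x hx
      rcases Finset.mem_union.mp hx with hx | hx
      · rcases Finset.mem_image.mp hx with ⟨w, hw, rfl⟩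
        have hw' : w < π p := Finset.mem_Iio.mp hw
        have hπx : π (π.symm w) = w := π.apply_symm_apply w
        by_contra hcon
        have hne : π.symm w ≠ p := by
          intro he
          rw [he] at hπx
          exact absurd (hπx ▸ hw') (lt_irrefl _)
        have hlt : p < π.symm w := lt_of_le_of_ne (not_lt.mp hcon) (Ne.symm hne)
        have hup : u i0 < p := hvj ▸ huv i0 j
        have h3 : π p < π (u i0) := hvj ▸ hπvu i0 j
        have h4 : π (π.symm w) < π p := by rw [hπx]; exact hw'
        exact hav (CKG.mk3 hup hlt h3 h4)
      · rcases Finset.mem_image.mp hx with ⟨i, _, rfl⟩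
        exact hvj ▸ huv i j
    have hdisj : Disjoint ((Finset.Iio (π p)).image π.symm) (Finset.image u Finset.univ) := by
      rw [Finset.disjoint_left]
      intro x hx hx'
      rcases Finset.mem_image.mp hx with ⟨w, hw, rfl⟩
      rcases Finset.mem_image.mp hx' with ⟨i, _, hui'⟩
      have h5 : π p < π (π.symm w) := by
        rw [← hui']
        exact hvj ▸ hπvu i j
      rw [π.apply_symm_apply] at h5
      exact absurd ((Finset.mem_Iio.mp hw).trans h5) (lt_irrefl _)
    have hcard : ((Finset.Iio (π p)).image π.symm ∪ Finset.image u Finset.univ).card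
        = (π p : ℕ) + k := by
      rw [Finset.card_union_of_disjoint hdisj,
        Finset.card_image_of_injective _ π.symm.injective, Fin.card_Iio,
        Finset.card_image_of_injective _ hu.injective, Finset.card_univ, Fintype.card_fin]
    have hsub : (Finset.Iio (π p)).image π.symm ∪ Finset.image u Finset.univ
        ⊆ Finset.Iio p := fun x hx => Finset.mem_Iio.mpr (h1 x hx)
    have hle := Finset.card_le_card hsub
    rw [hcard, Fin.card_Iio] at hle
    exact hle

/-- displacement ⇒ `k`-good -/
lemma kGood_of {k l : ℕ} (hk : 0 < k) (hl : l ≤ k) {π : Equiv.Perm (Fin (2 * k + l))}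
    (hav : ¬ HasDecSeq π 3) (hdisp : Disp k π) : KGood k π := by
  have hup_low : ∀ x : Fin (2 * k + l), (x : ℕ) < k → Up k π x := by
    intro x hx
    rcases hdisp x with h | h
    · exact h
    · exfalso; have h' : (π x : ℕ) + k ≤ (x : ℕ) := h; omega
  have hdn_lowval : ∀ x : Fin (2 * k + l), (π x : ℕ) < k → Dn k π x := by
    intro x hx
    rcases hdisp x with h | h
    · exfalso; have h' : (x : ℕ) + k ≤ (π x : ℕ) := h; omega
    · exact h
  have hdn_highpos : ∀ x : Fin (2 * k + l), k + l ≤ (x : ℕ) → Dn k π x := by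
    intro x hx
    rcases hdisp x with h | h
    · exfalso
      have h' : (x : ℕ) + k ≤ (π x : ℕ) := h
      have h2 := (π x).isLt
      omega
    · exact h
  have hup_highval : ∀ x : Fin (2 * k + l), k + l ≤ (π x : ℕ) → Up k π x := by
    intro x hx
    rcases hdisp x with h | h
    · exact h
    · exfalso
      have h' : (π x : ℕ) + k ≤ (x : ℕ) := h
      have h2 := x.isLt
      omega
  intro p
  have hcover : ((p : ℕ) < k ∨ (π p : ℕ) < k) ∨ (k + l ≤ (p : ℕ) ∨ k + l ≤ (π p : ℕ)) := by
    by_contra hcon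
    push_neg at hcon
    obtain ⟨⟨c1, c2⟩, c3, c4⟩ := hcon
    rcases hdisp p with h | h
    · have h' : (p : ℕ) + k ≤ (π p : ℕ) := h; omega
    · have h' : (π p : ℕ) + k ≤ (p : ℕ) := h; omega
  have emb1 : ∀ m : Fin k, (m : ℕ) < 2 * k + l := fun m => by have := m.isLt; omega
  have emb2 : ∀ m : Fin k, k + l + (m : ℕ) < 2 * k + l := fun m => by have := m.isLt; omega
  rcases hcover with hc | hc
  · -- occurrence 1 : positions 0..k-1 and values 0..k-1
    have key : ∀ m : Fin k, (m : ℕ) + k ≤ ((π.symm ⟨(m : ℕ), emb1 m⟩ : Fin (2*k+l)) : ℕ) := by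
      intro m
      have h := hdn_lowval (π.symm ⟨(m : ℕ), emb1 m⟩)
        (by rw [Equiv.apply_symm_apply]; exact m.isLt)
      have h' : (π (π.symm ⟨(m : ℕ), emb1 m⟩) : ℕ) + k
          ≤ ((π.symm ⟨(m : ℕ), emb1 m⟩ : Fin (2*k+l)) : ℕ) := h
      rwa [Equiv.apply_symm_apply] at h'
    have keyu : ∀ m : Fin k, (m : ℕ) + k
        ≤ (π ⟨(m : ℕ), emb1 m⟩ : ℕ) := fun m => hup_low ⟨(m : ℕ), emb1 m⟩ m.isLt
    refine ⟨fun i => ⟨(i : ℕ), emb1 i⟩, fun j => π.symm ⟨(j : ℕ), emb1 j⟩,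
      ?_, ?_, ?_, ?_, ?_, ?_, ?_⟩
    · intro a b hab
      rw [Fin.lt_def] at hab ⊢
      exact hab
    · intro a b hab
      have ha := key a
      have hb := key b
      by_contra hcon
      have hne : π.symm ⟨(b : ℕ), emb1 b⟩ ≠ π.symm ⟨(a : ℕ), emb1 a⟩ := by
        intro he
        have h2 := π.symm.injective he
        rw [Fin.mk.injEq] at h2
        rw [Fin.lt_def] at hab
        omega
      have hlt : π.symm ⟨(b : ℕ), emb1 b⟩ < π.symm ⟨(a : ℕ), emb1 a⟩ :=
        lt_of_le_of_ne (not_lt.mp hcon) hne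
      have hmono := no321_mono_dn hav hlt
        (by rw [Equiv.apply_symm_apply]; simp only [Fin.val_mk]; omega)
        (by rw [Equiv.apply_symm_apply]; simp only [Fin.val_mk]; omega)
      rw [Equiv.apply_symm_apply, Equiv.apply_symm_apply, Fin.lt_def] at hmono
      simp only [Fin.val_mk] at hmono
      rw [Fin.lt_def] at hab
      omega
    · intro a b hab
      have ha := keyu a
      have hb := keyu b
      exact no321_mono_up hav
        (show (⟨(a : ℕ), emb1 a⟩ : Fin (2*k+l)) < ⟨(b : ℕ), emb1 b⟩ from by
          rw [Fin.lt_def]; simp only [Fin.val_mk]; exact hab)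
        (show (a : ℕ) < (π ⟨(a : ℕ), emb1 a⟩ : ℕ) by omega)
        (show (b : ℕ) < (π ⟨(b : ℕ), emb1 b⟩ : ℕ) by omega)
    · intro a b hab
      simp only [Equiv.apply_symm_apply]
      rw [Fin.lt_def]
      simp only [Fin.val_mk]
      exact hab
    · intro i j
      have hj := key j
      rw [Fin.lt_def]
      simp only [Fin.val_mk]
      have hi := i.isLt
      omega
    · intro i j
      have hi := keyu i
      rw [Equiv.apply_symm_apply, Fin.lt_def]
      simp only [Fin.val_mk] at hi ⊢
      have hj := j.isLt
      omega
    · rcases hc with hc | hc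
      · exact Or.inl ⟨⟨(p : ℕ), hc⟩, Fin.ext rfl⟩
      · refine Or.inr ⟨⟨(π p : ℕ), hc⟩, ?_⟩
        rw [Equiv.symm_apply_eq]
  · -- occurrence 2 : values k+l..2k+l-1 and positions k+l..2k+l-1
    have key : ∀ m : Fin k,
        ((π.symm ⟨k + l + (m : ℕ), emb2 m⟩ : Fin (2*k+l)) : ℕ) + k ≤ k + l + (m : ℕ) := by
      intro m
      have h := hup_highval (π.symm ⟨k + l + (m : ℕ), emb2 m⟩)
        (by rw [Equiv.apply_symm_apply]; simp only [Fin.val_mk]; omega)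
      have h' : ((π.symm ⟨k + l + (m : ℕ), emb2 m⟩ : Fin (2*k+l)) : ℕ) + k
          ≤ (π (π.symm ⟨k + l + (m : ℕ), emb2 m⟩) : ℕ) := h
      rwa [Equiv.apply_symm_apply] at h'
    have keyv : ∀ m : Fin k, (π ⟨k + l + (m : ℕ), emb2 m⟩ : ℕ) + k
        ≤ ((⟨k + l + (m : ℕ), emb2 m⟩ : Fin (2*k+l)) : ℕ) := by
      intro m
      exact hdn_highpos _ (by simp only [Fin.val_mk]; omega)
    refine ⟨fun i => π.symm ⟨k + l + (i : ℕ), emb2 i⟩, fun j => ⟨k + l + (j : ℕ), emb2 j⟩,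
      ?_, ?_, ?_, ?_, ?_, ?_, ?_⟩
    · intro a b hab
      have ha := key a
      have hb := key b
      by_contra hcon
      have hne : π.symm ⟨k + l + (b : ℕ), emb2 b⟩ ≠ π.symm ⟨k + l + (a : ℕ), emb2 a⟩ := by
        intro he
        have h2 := π.symm.injective he
        rw [Fin.mk.injEq] at h2
        rw [Fin.lt_def] at hab
        omega
      have hlt : π.symm ⟨k + l + (b : ℕ), emb2 b⟩ < π.symm ⟨k + l + (a : ℕ), emb2 a⟩ :=
        lt_of_le_of_ne (not_lt.mp hcon) hne
      have hmono := no321_mono_up hav hlt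
        (by rw [Equiv.apply_symm_apply]; simp only [Fin.val_mk]; omega)
        (by rw [Equiv.apply_symm_apply]; simp only [Fin.val_mk]; omega)
      rw [Equiv.apply_symm_apply, Equiv.apply_symm_apply, Fin.lt_def] at hmono
      simp only [Fin.val_mk] at hmono
      rw [Fin.lt_def] at hab
      omega
    · intro a b hab
      rw [Fin.lt_def] at hab ⊢
      simp only [Fin.val_mk]
      omega
    · intro a b hab
      simp only [Equiv.apply_symm_apply]
      rw [Fin.lt_def]
      simp only [Fin.val_mk]
      rw [Fin.lt_def] at hab
      omega
    · intro a b hab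
      have ha := keyv a
      have hb := keyv b
      refine no321_mono_dn hav ?_ (by simp only [Fin.val_mk] at ha ⊢; omega)
        (by simp only [Fin.val_mk] at hb ⊢; omega)
      rw [Fin.lt_def]
      simp only [Fin.val_mk]
      rw [Fin.lt_def] at hab
      omega
    · intro i j
      have hi := key i
      rw [Fin.lt_def]
      simp only [Fin.val_mk]
      have := i.isLt
      omega
    · intro i j
      have hj := keyv j
      rw [Equiv.apply_symm_apply, Fin.lt_def]
      simp only [Fin.val_mk] at hj ⊢
      have := j.isLt
      omega
    · rcases hc with hc | hc
      · refine Or.inr ⟨⟨(p : ℕ) - (k + l), by have := p.isLt; omega⟩, ?_⟩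
        apply Fin.ext
        simp only [Fin.val_mk]
        omega
      · refine Or.inl ⟨⟨(π p : ℕ) - (k + l), by have := (π p).isLt; omega⟩, ?_⟩
        rw [Equiv.symm_apply_eq]
        apply Fin.ext
        simp only [Fin.val_mk]
        omega

end Main

namespace CKG2

open Finset

/-! ### rank lemmas -/

lemma rank_eq {α : Type*} [LinearOrder α] [DecidableEq α] {s t : Finset α} {f : α → α}
    (hmono : StrictMonoOn f ↑s) (himg : s.image f = t) {x : α} (hx : x ∈ s) :
    (t.filter (· < f x)).card = (s.filter (· < x)).card := by
  subst himg
  rw [Finset.filter_image]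
  rw [Finset.card_image_of_injOn
    (hmono.injOn.mono (Finset.coe_subset.mpr (Finset.filter_subset _ s)))]
  congr 1
  ext a
  simp only [Finset.mem_filter, and_congr_right_iff]
  intro ha
  constructor
  · intro h
    by_contra hcon
    rcases lt_or_eq_of_le (not_lt.mp hcon) with h2 | h2
    · exact absurd (hmono hx ha h2) (not_lt.mpr h.le)
    · rw [h2] at h; exact absurd h (lt_irrefl _)
  · exact fun h => hmono ha hx h

lemma rank_injOn {α : Type*} [LinearOrder α] [DecidableEq α] {t : Finset α} {y z : α}
    (hy : y ∈ t) (hz : z ∈ t)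
    (h : (t.filter (· < y)).card = (t.filter (· < z)).card) : y = z := by
  have key : ∀ {u v : α}, u ∈ t → v ∈ t → u < v →
      (t.filter (· < u)).card < (t.filter (· < v)).card := by
    intro u v hu hv huv
    apply Finset.card_lt_card
    constructor
    · intro w hw
      have := Finset.mem_filter.mp hw
      exact Finset.mem_filter.mpr ⟨this.1, this.2.trans huv⟩
    · intro hsub
      have := Finset.mem_filter.mp (hsub (Finset.mem_filter.mpr ⟨hu, huv⟩))
      exact absurd this.2 (lt_irrefl _)
  rcases lt_trichotomy y z with h2 | h2 | h2
  · exact absurd h (Nat.ne_of_lt (key hy hz h2))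
  · exact h2
  · exact absurd h.symm (Nat.ne_of_lt (key hz hy h2))

lemma eqOn_of_strictMonoOn {α : Type*} [LinearOrder α] [DecidableEq α] {s : Finset α}
    {f g : α → α} (hf : StrictMonoOn f ↑s) (hg : StrictMonoOn g ↑s)
    (himg : s.image f = s.image g) {x : α} (hx : x ∈ s) : f x = g x := by
  have h1 := rank_eq hf rfl hx
  have h2 := rank_eq hg himg.symm hx
  exact rank_injOn (Finset.mem_image_of_mem f hx)
    (himg ▸ Finset.mem_image_of_mem g hx) (h1.trans h2.symm)

/-! ### the ℕ-shadows of the up-set (positions) and up-value set -/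

def eN (k l : ℕ) (A : Finset (Fin l)) : Finset ℕ :=
  Finset.range k ∪ A.image (fun a : Fin l => k + (a : ℕ))

def vN (k l : ℕ) (B : Finset (Fin l)) : Finset ℕ :=
  B.image (fun b : Fin l => k + (b : ℕ)) ∪ Finset.Ico (k + l) (2 * k + l)

lemma mem_eN {k l : ℕ} {A : Finset (Fin l)} {m : ℕ} :
    m ∈ eN k l A ↔ m < k ∨ ∃ a ∈ A, m = k + (a : ℕ) := by
  simp only [eN, Finset.mem_union, Finset.mem_range, Finset.mem_image]
  constructor
  · rintro (h | ⟨a, ha, rfl⟩)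
    · exact Or.inl h
    · exact Or.inr ⟨a, ha, rfl⟩
  · rintro (h | ⟨a, ha, rfl⟩)
    · exact Or.inl h
    · exact Or.inr ⟨a, ha, rfl⟩

lemma mem_vN {k l : ℕ} {B : Finset (Fin l)} {m : ℕ} :
    m ∈ vN k l B ↔ (∃ b ∈ B, m = k + (b : ℕ)) ∨ (k + l ≤ m ∧ m < 2 * k + l) := by
  simp only [vN, Finset.mem_union, Finset.mem_image, Finset.mem_Ico]
  constructor
  · rintro (⟨b, hb, rfl⟩ | h)
    · exact Or.inl ⟨b, hb, rfl⟩
    · exact Or.inr h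
  · rintro (⟨b, hb, rfl⟩ | h)
    · exact Or.inl ⟨b, hb, rfl⟩
    · exact Or.inr h

lemma eN_lt (k l : ℕ) (A : Finset (Fin l)) : ∀ m ∈ eN k l A, m < 2 * k + l := by
  intro m hm
  rw [mem_eN] at hm
  rcases hm with h | ⟨a, _, rfl⟩
  · omega
  · have := a.isLt; omega

lemma vN_lt (k l : ℕ) (B : Finset (Fin l)) : ∀ m ∈ vN k l B, m < 2 * k + l := by
  intro m hm
  rw [mem_vN] at hm
  rcases hm with ⟨b, _, rfl⟩ | h
  · have := b.isLt; omega
  · exact h.2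

lemma card_eN (k l : ℕ) (A : Finset (Fin l)) : (eN k l A).card = k + A.card := by
  rw [eN, Finset.card_union_of_disjoint, Finset.card_range,
    Finset.card_image_of_injective _ (fun a b h => Fin.val_injective (by omega))]
  rw [Finset.disjoint_left]
  intro m hm hm'
  rcases Finset.mem_image.mp hm' with ⟨a, _, rfl⟩
  rw [Finset.mem_range] at hm
  omega

lemma card_vN (k l : ℕ) (B : Finset (Fin l)) : (vN k l B).card = k + B.card := by
  rw [vN, Finset.card_union_of_disjoint, Nat.card_Ico,
    Finset.card_image_of_injective _ (fun a b h => Fin.val_injective (by omega))]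
  · omega
  · rw [Finset.disjoint_left]
    intro m hm hm'
    rcases Finset.mem_image.mp hm with ⟨b, _, rfl⟩
    rw [Finset.mem_Ico] at hm'
    have := b.isLt
    omega

lemma compl_eN (k l : ℕ) (A : Finset (Fin l)) :
    Finset.range (2 * k + l) \ eN k l A = vN k l Aᶜ := by
  ext m
  simp only [Finset.mem_sdiff, Finset.mem_range, mem_eN, mem_vN, Finset.mem_compl]
  constructor
  · rintro ⟨hm, hne⟩
    push_neg at hne
    obtain ⟨h1, h2⟩ := hne
    by_cases hml : m < k + l
    · exact Or.inl ⟨⟨m - k, by omega⟩,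
        fun ha => h2 _ ha (show m = k + (m - k) by omega),
        show m = k + (m - k) by omega⟩
    · exact Or.inr ⟨by omega, hm⟩
  · rintro (⟨b, hb, rfl⟩ | ⟨h1, h2⟩)
    · have hbl := b.isLt
      refine ⟨by omega, ?_⟩
      push_neg
      refine ⟨by omega, fun a ha he => ?_⟩
      exact hb ((Fin.val_injective (show (b : ℕ) = (a : ℕ) by omega)) ▸ ha)
    · refine ⟨h2, ?_⟩
      push_neg
      refine ⟨by omega, fun a ha he => ?_⟩
      have := a.isLt
      omega

lemma compl_vN (k l : ℕ) (B : Finset (Fin l)) :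
    Finset.range (2 * k + l) \ vN k l B = eN k l Bᶜ := by
  ext m
  simp only [Finset.mem_sdiff, Finset.mem_range, mem_eN, mem_vN, Finset.mem_compl]
  constructor
  · rintro ⟨hm, hne⟩
    push_neg at hne
    obtain ⟨h1, h2⟩ := hne
    by_cases hmk : m < k
    · exact Or.inl hmk
    · exact Or.inr ⟨⟨m - k, by omega⟩,
        fun hb => h1 _ hb (show m = k + (m - k) by omega),
        show m = k + (m - k) by omega⟩
  · rintro (h | ⟨b, hb, rfl⟩)
    · refine ⟨by omega, ?_⟩
      push_neg
      exact ⟨fun a ha he => by have := a.isLt; omega, by omega⟩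
    · have hbl := b.isLt
      refine ⟨by omega, ?_⟩
      push_neg
      refine ⟨fun a ha he => ?_, by omega⟩
      exact hb ((Fin.val_injective (show (b : ℕ) = (a : ℕ) by omega)) ▸ ha)

/-! ### the key counting inequality -/

lemma K1 {k l : ℕ} (hl : l ≤ k) (A B : Finset (Fin l)) (hcard : A.card = B.card) (m : ℕ) :
    ((vN k l B).filter (· < m + k)).card ≤ ((eN k l A).filter (· < m)).card := by
  have hAl : A.card ≤ l := by
    have := Finset.card_le_univ A
    simpa using this
  -- left side pieces
  have hL : ((vN k l B).filter (· < m + k)).card ≤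
      ((B.image (fun b : Fin l => k + (b : ℕ))).filter (· < m + k)).card +
      ((Finset.Ico (k + l) (2 * k + l)).filter (· < m + k)).card := by
    rw [vN, Finset.filter_union]
    exact Finset.card_union_le _ _
  have hB1 : ((B.image (fun b : Fin l => k + (b : ℕ))).filter (· < m + k)).card ≤ B.card :=
    le_trans (Finset.card_le_card (Finset.filter_subset _ _)) Finset.card_image_le
  have hB2 : ((B.image (fun b : Fin l => k + (b : ℕ))).filter (· < m + k)).card ≤ m := by
    have hsub : (B.image (fun b : Fin l => k + (b : ℕ))).filter (· < m + k) ⊆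
        Finset.Ico k (k + m) := by
      intro x hx
      rw [Finset.mem_filter] at hx
      rcases Finset.mem_image.mp hx.1 with ⟨b, _, rfl⟩
      rw [Finset.mem_Ico]
      have := hx.2
      omega
    have := Finset.card_le_card hsub
    rwa [Nat.card_Ico, Nat.add_sub_cancel_left] at this
  have hIco : ((Finset.Ico (k + l) (2 * k + l)).filter (· < m + k)).card
      = min (2 * k + l) (m + k) - (k + l) := by
    rw [Finset.Ico_filter_lt]
    exact Nat.card_Ico _ _
  -- right side
  have hrange : (Finset.range k).filter (· < m) = Finset.range (min k m) := by
    ext x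
    simp only [Finset.mem_filter, Finset.mem_range, lt_min_iff]
  have hR : ((eN k l A).filter (· < m)).card
      = min k m + (A.filter (fun a : Fin l => k + (a : ℕ) < m)).card := by
    rw [eN, Finset.filter_union, Finset.card_union_of_disjoint, hrange,
      Finset.card_range, Finset.filter_image,
      Finset.card_image_of_injective _ (fun a b h => Fin.val_injective (by omega))]
    rw [Finset.disjoint_left]
    intro x hx hx'
    rw [Finset.mem_filter] at hx hx'
    rcases Finset.mem_image.mp hx'.1 with ⟨a, _, rfl⟩
    rw [Finset.mem_range] at hx
    omega
  have hA1 : (A.filter (fun a : Fin l => k + (a : ℕ) < m)).card + (l - (m - k)) ≥ A.card := by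
    have hsplit := Finset.card_filter_add_card_filter_not
      (s := A) (p := fun a : Fin l => k + (a : ℕ) < m)
    have hneg : (A.filter (fun a : Fin l => ¬ (k + (a : ℕ) < m))).card ≤ l - (m - k) := by
      have hle := Finset.card_le_card_of_injOn
        (f := fun a : Fin l => (a : ℕ)) (s := A.filter (fun a : Fin l => ¬ (k + (a : ℕ) < m)))
        (t := Finset.Ico (m - k) l) ?_ ?_
      · rwa [Nat.card_Ico] at hle
      · intro a ha
        rw [Finset.mem_coe, Finset.mem_filter] at ha
        simp only [Finset.coe_Ico, Set.mem_Ico]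
        have h2 := ha.2
        have h3 := a.isLt
        omega
      · intro a _ b _ h
        exact Fin.val_injective h
    omega
  omega

/-! ### gluing two monotone bijections into a permutation -/

section Glue

variable {α : Type*} [Fintype α] [LinearOrder α] [DecidableEq α]

lemma compl_card_eq {S T : Finset α} (h : S.card = T.card) : Tᶜ.card = Sᶜ.card := by
  rw [Finset.card_compl, Finset.card_compl, h]

noncomputable def glue (S T : Finset α) (h : S.card = T.card) (x : α) : α :=
  if hx : x ∈ S then
    ((T.orderIsoOfFin h.symm) ((S.orderIsoOfFin rfl).symm ⟨x, hx⟩) : α)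
  else
    ((Tᶜ.orderIsoOfFin (compl_card_eq h))
      ((Sᶜ.orderIsoOfFin rfl).symm ⟨x, Finset.mem_compl.mpr hx⟩) : α)

lemma glue_mem {S T : Finset α} (h : S.card = T.card) {x : α} (hx : x ∈ S) :
    glue S T h x ∈ T := by
  rw [glue, dif_pos hx]
  exact Finset.coe_mem _

lemma glue_mem_compl {S T : Finset α} (h : S.card = T.card) {x : α} (hx : x ∉ S) :
    glue S T h x ∈ Tᶜ := by
  rw [glue, dif_neg hx]
  exact Finset.coe_mem _

lemma glue_strictMonoOn {S T : Finset α} (h : S.card = T.card) :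
    StrictMonoOn (glue S T h) ↑S := by
  intro x hx y hy hxy
  rw [Finset.mem_coe] at hx hy
  simp only [glue]; rw [dif_pos hx, dif_pos hy]
  have h1 : (S.orderIsoOfFin rfl).symm ⟨x, hx⟩ < (S.orderIsoOfFin rfl).symm ⟨y, hy⟩ := by
    rw [OrderIso.lt_iff_lt]
    exact Subtype.mk_lt_mk.mpr hxy
  exact Subtype.coe_lt_coe.mpr ((T.orderIsoOfFin h.symm).lt_iff_lt.mpr h1)

lemma glue_strictMonoOn_compl {S T : Finset α} (h : S.card = T.card) :
    StrictMonoOn (glue S T h) ↑Sᶜ := by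
  intro x hx y hy hxy
  rw [Finset.mem_coe, Finset.mem_compl] at hx hy
  simp only [glue]; rw [dif_neg hx, dif_neg hy]
  have h1 : (Sᶜ.orderIsoOfFin rfl).symm ⟨x, Finset.mem_compl.mpr hx⟩
      < (Sᶜ.orderIsoOfFin rfl).symm ⟨y, Finset.mem_compl.mpr hy⟩ := by
    rw [OrderIso.lt_iff_lt]
    exact Subtype.mk_lt_mk.mpr hxy
  exact Subtype.coe_lt_coe.mpr ((Tᶜ.orderIsoOfFin (compl_card_eq h)).lt_iff_lt.mpr h1)

lemma glue_injective {S T : Finset α} (h : S.card = T.card) :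
    Function.Injective (glue S T h) := by
  intro x y he
  by_cases hx : x ∈ S <;> by_cases hy : y ∈ S
  · simp only [glue] at he; rw [dif_pos hx, dif_pos hy] at he
    have h1 := (T.orderIsoOfFin h.symm).injective (Subtype.coe_injective he)
    have h2 := (S.orderIsoOfFin rfl).symm.injective h1
    exact Subtype.mk_eq_mk.mp h2
  · exact absurd (he ▸ glue_mem h hx) (Finset.mem_compl.mp (glue_mem_compl h hy))
  · exact absurd (he.symm ▸ glue_mem h hy) (Finset.mem_compl.mp (glue_mem_compl h hx))
  · simp only [glue] at he; rw [dif_neg hx, dif_neg hy] at he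
    have h1 := (Tᶜ.orderIsoOfFin (compl_card_eq h)).injective (Subtype.coe_injective he)
    have h2 := (Sᶜ.orderIsoOfFin rfl).symm.injective h1
    exact Subtype.mk_eq_mk.mp h2

lemma glue_image {S T : Finset α} (h : S.card = T.card) :
    S.image (glue S T h) = T := by
  apply Finset.eq_of_subset_of_card_le
  · intro y hy
    rcases Finset.mem_image.mp hy with ⟨x, hx, rfl⟩
    exact glue_mem h hx
  · rw [Finset.card_image_of_injective _ (glue_injective h), h]

lemma glue_image_compl {S T : Finset α} (h : S.card = T.card) :
    Sᶜ.image (glue S T h) = Tᶜ := by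
  apply Finset.eq_of_subset_of_card_le
  · intro y hy
    rcases Finset.mem_image.mp hy with ⟨x, hx, rfl⟩
    exact glue_mem_compl h (Finset.mem_compl.mp hx)
  · rw [Finset.card_image_of_injective _ (glue_injective h), compl_card_eq h]

end Glue

/-! ### transferring rank counts through `attachFin` -/

lemma attachFin_filter_lt {N : ℕ} (s : Finset ℕ) (h : ∀ m ∈ s, m < N) (x : Fin N) :
    ((s.attachFin h).filter (· < x)).card = (s.filter (· < (x : ℕ))).card := by
  have he : (s.attachFin h).filter (· < x)
      = (s.filter (· < (x : ℕ))).attachFin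
        (fun m hm => h m (Finset.mem_filter.mp hm).1) := by
    ext z
    simp only [Finset.mem_filter, Finset.mem_attachFin, Fin.lt_def]
  rw [he, Finset.card_attachFin]

lemma attachFin_compl {N : ℕ} (s : Finset ℕ) (h : ∀ m ∈ s, m < N) :
    (s.attachFin h)ᶜ = (Finset.range N \ s).attachFin
      (fun m hm => Finset.mem_range.mp (Finset.mem_sdiff.mp hm).1) := by
  ext z
  simp only [Finset.mem_compl, Finset.mem_attachFin, Finset.mem_sdiff, Finset.mem_range]
  have := z.isLt
  tauto

lemma attachFin_congr {N : ℕ} {s t : Finset ℕ} (he : s = t) (h : ∀ m ∈ s, m < N) :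
    s.attachFin h = t.attachFin (he ▸ h) := by
  subst he
  rfl

/-- up-step: if ranks are preserved and the value-set counts dominate as in `K1`,
every element is displaced upwards by at least `k`. -/
lemma step_up {N k : ℕ} {sN tN : Finset ℕ} {hs : ∀ m ∈ sN, m < N} {ht : ∀ m ∈ tN, m < N}
    {f : Fin N → Fin N} (hmono : StrictMonoOn f ↑(sN.attachFin hs))
    (himg : (sN.attachFin hs).image f = tN.attachFin ht)
    (hcnt : ∀ m, (tN.filter (· < m + k)).card ≤ (sN.filter (· < m)).card)
    {x : Fin N} (hx : x ∈ sN.attachFin hs) : (x : ℕ) + k ≤ (f x : ℕ) := by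
  by_contra hcon
  push_neg at hcon
  have hr := rank_eq hmono himg hx
  rw [attachFin_filter_lt, attachFin_filter_lt] at hr
  have hfx : (f x : ℕ) ∈ tN := by
    have hmem : f x ∈ tN.attachFin ht := himg ▸ Finset.mem_image_of_mem f hx
    rwa [Finset.mem_attachFin] at hmem
  have hsub : insert ((f x : ℕ)) (tN.filter (· < (f x : ℕ))) ⊆ tN.filter (· < (x : ℕ) + k) := by
    intro z hz
    rcases Finset.mem_insert.mp hz with rfl | hz
    · exact Finset.mem_filter.mpr ⟨hfx, hcon⟩
    · have h2 := Finset.mem_filter.mp hz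
      exact Finset.mem_filter.mpr ⟨h2.1, h2.2.trans hcon⟩
  have hcard := Finset.card_le_card hsub
  rw [Finset.card_insert_of_notMem (by simp)] at hcard
  have h3 := hcnt (x : ℕ)
  omega

/-- down-step: dual form. -/
lemma step_dn {N k : ℕ} {sN tN : Finset ℕ} {hs : ∀ m ∈ sN, m < N} {ht : ∀ m ∈ tN, m < N}
    {f : Fin N → Fin N} (hmono : StrictMonoOn f ↑(sN.attachFin hs))
    (himg : (sN.attachFin hs).image f = tN.attachFin ht)
    (hcnt : ∀ m, (sN.filter (· < m + k)).card ≤ (tN.filter (· < m)).card)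
    {x : Fin N} (hx : x ∈ sN.attachFin hs) : (f x : ℕ) + k ≤ (x : ℕ) := by
  by_contra hcon
  push_neg at hcon
  have hr := rank_eq hmono himg hx
  rw [attachFin_filter_lt, attachFin_filter_lt] at hr
  have hxm : (x : ℕ) ∈ sN := by
    rwa [Finset.mem_attachFin] at hx
  have hsub : insert ((x : ℕ)) (sN.filter (· < (x : ℕ))) ⊆ sN.filter (· < (f x : ℕ) + k) := by
    intro z hz
    rcases Finset.mem_insert.mp hz with rfl | hz
    · exact Finset.mem_filter.mpr ⟨hxm, hcon⟩
    · have h2 := Finset.mem_filter.mp hz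
      exact Finset.mem_filter.mpr ⟨h2.1, h2.2.trans hcon⟩
  have hcard := Finset.card_le_card hsub
  rw [Finset.card_insert_of_notMem (by simp)] at hcard
  have h3 := hcnt ((f x : ℕ))
  omega

end CKG2

namespace CKG3

open Finset CKG CKG2

variable {k l : ℕ}

def EF (k l : ℕ) (A : Finset (Fin l)) : Finset (Fin (2 * k + l)) :=
  (eN k l A).attachFin (eN_lt k l A)

def VF (k l : ℕ) (B : Finset (Fin l)) : Finset (Fin (2 * k + l)) :=
  (vN k l B).attachFin (vN_lt k l B)

lemma card_EF (A : Finset (Fin l)) : (EF k l A).card = k + A.card := by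
  rw [EF, Finset.card_attachFin, card_eN]

lemma card_VF (B : Finset (Fin l)) : (VF k l B).card = k + B.card := by
  rw [VF, Finset.card_attachFin, card_vN]

lemma EF_compl (A : Finset (Fin l)) :
    (EF k l A)ᶜ = (vN k l Aᶜ).attachFin (vN_lt k l Aᶜ) := by
  rw [EF, attachFin_compl]
  exact attachFin_congr (compl_eN k l A) _

lemma VF_compl (B : Finset (Fin l)) :
    (VF k l B)ᶜ = (eN k l Bᶜ).attachFin (eN_lt k l Bᶜ) := by
  rw [VF, attachFin_compl]
  exact attachFin_congr (compl_vN k l B) _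

lemma cardEV {A B : Finset (Fin l)} (h : A.card = B.card) :
    (EF k l A).card = (VF k l B).card := by
  rw [card_EF, card_VF, h]

noncomputable def psi (k l : ℕ) (A B : Finset (Fin l)) (h : A.card = B.card) :
    Equiv.Perm (Fin (2 * k + l)) :=
  Equiv.ofBijective (glue (EF k l A) (VF k l B) (cardEV h))
    ((Finite.injective_iff_bijective).mp (glue_injective _))

lemma psi_apply {A B : Finset (Fin l)} (h : A.card = B.card) (x : Fin (2 * k + l)) :
    psi k l A B h x = glue (EF k l A) (VF k l B) (cardEV h) x := rfl

lemma psi_up (hl : l ≤ k) {A B : Finset (Fin l)} {h : A.card = B.card}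
    {x : Fin (2 * k + l)} (hx : x ∈ EF k l A) :
    (x : ℕ) + k ≤ (psi k l A B h x : ℕ) := by
  rw [psi_apply]
  exact step_up (glue_strictMonoOn (cardEV h)) (glue_image (cardEV h)) (K1 hl A B h) hx

lemma psi_dn (hl : l ≤ k) {A B : Finset (Fin l)} {h : A.card = B.card}
    {x : Fin (2 * k + l)} (hx : x ∉ EF k l A) :
    (psi k l A B h x : ℕ) + k ≤ (x : ℕ) := by
  rw [psi_apply]
  have hx' : x ∈ (EF k l A)ᶜ := Finset.mem_compl.mpr hx
  rw [EF_compl] at hx'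
  have hmono := glue_strictMonoOn_compl (S := EF k l A) (T := VF k l B) (cardEV h)
  rw [EF_compl] at hmono
  have himg := glue_image_compl (S := EF k l A) (T := VF k l B) (cardEV h)
  rw [EF_compl, VF_compl] at himg
  have hcc : Bᶜ.card = Aᶜ.card := by
    rw [Finset.card_compl, Finset.card_compl, h]
  exact step_dn hmono himg (K1 hl Bᶜ Aᶜ hcc) hx'

lemma psi_disp (hl : l ≤ k) (A B : Finset (Fin l)) (h : A.card = B.card) :
    Disp k (psi k l A B h) := by
  intro x
  by_cases hx : x ∈ EF k l A
  · exact Or.inl (psi_up hl hx)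
  · exact Or.inr (psi_dn hl hx)

lemma psi_avoid (A B : Finset (Fin l)) (h : A.card = B.card) :
    ¬ HasDecSeq (psi k l A B h) 3 := by
  rintro ⟨q, hmono, hanti⟩
  have h01 : q 0 < q 1 := hmono (show (0 : Fin 3) < 1 by decide)
  have h12 : q 1 < q 2 := hmono (show (1 : Fin 3) < 2 by decide)
  have a01 : psi k l A B h (q 1) < psi k l A B h (q 0) :=
    hanti (show (0 : Fin 3) < 1 by decide)
  have a12 : psi k l A B h (q 2) < psi k l A B h (q 1) :=
    hanti (show (1 : Fin 3) < 2 by decide)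
  rw [psi_apply, psi_apply] at a01 a12
  have hsup := glue_strictMonoOn (S := EF k l A) (T := VF k l B) (cardEV h)
  have hsdn := glue_strictMonoOn_compl (S := EF k l A) (T := VF k l B) (cardEV h)
  have key : ∀ x y : Fin (2 * k + l), x < y →
      glue (EF k l A) (VF k l B) (cardEV h) y < glue (EF k l A) (VF k l B) (cardEV h) x →
      ¬ (x ∈ EF k l A ↔ y ∈ EF k l A) := by
    intro x y hxy hval hiff
    by_cases hx : x ∈ EF k l A
    · have hy := hiff.mp hx
      exact absurd (hsup (Finset.mem_coe.mpr hx) (Finset.mem_coe.mpr hy) hxy)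
        (not_lt.mpr hval.le)
    · have hy : y ∉ EF k l A := fun hy' => hx (hiff.mpr hy')
      exact absurd (hsdn (Finset.mem_coe.mpr (Finset.mem_compl.mpr hx))
        (Finset.mem_coe.mpr (Finset.mem_compl.mpr hy)) hxy) (not_lt.mpr hval.le)
  have k01 := key _ _ h01 a01
  have k12 := key _ _ h12 a12
  have k02 := key _ _ (h01.trans h12) (a12.trans a01)
  tauto

lemma up_iff (hk : 0 < k) (hl : l ≤ k) {A B : Finset (Fin l)} {h : A.card = B.card}
    (x : Fin (2 * k + l)) : x ∈ EF k l A ↔ Up k (psi k l A B h) x := by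
  constructor
  · exact fun hx => psi_up hl hx
  · intro hup
    by_contra hx
    have h1 := psi_dn (h := h) hl hx
    have h2 : (x : ℕ) + k ≤ (psi k l A B h x : ℕ) := hup
    omega

lemma psi_coe {A B : Finset (Fin l)} (h : A.card = B.card) :
    ⇑(psi k l A B h) = glue (EF k l A) (VF k l B) (cardEV h) := rfl

lemma psi_image {A B : Finset (Fin l)} (h : A.card = B.card) :
    (EF k l A).image ⇑(psi k l A B h) = VF k l B := by
  rw [psi_coe]
  exact glue_image _

lemma psi_image_compl {A B : Finset (Fin l)} (h : A.card = B.card) :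
    ((EF k l A)ᶜ).image ⇑(psi k l A B h) = (VF k l B)ᶜ := by
  rw [psi_coe]
  exact glue_image_compl _

lemma vmem_iff (hk : 0 < k) (hl : l ≤ k) {A B : Finset (Fin l)} {h : A.card = B.card}
    (y : Fin (2 * k + l)) : y ∈ VF k l B ↔ (psi k l A B h).symm y ∈ EF k l A := by
  constructor
  · intro hy
    obtain ⟨x, hx, hxy⟩ := Finset.mem_image.mp ((psi_image h) ▸ hy)
    rw [← hxy, Equiv.symm_apply_apply]
    exact hx
  · intro hx
    have h2 := Finset.mem_image_of_mem (⇑(psi k l A B h)) hx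
    rwa [psi_image h, Equiv.apply_symm_apply] at h2

lemma mem_EF_mid (A : Finset (Fin l)) (a : Fin l) :
    (⟨k + (a : ℕ), by have := a.isLt; omega⟩ : Fin (2 * k + l)) ∈ EF k l A ↔ a ∈ A := by
  rw [EF, Finset.mem_attachFin, mem_eN]
  simp only [Fin.val_mk]
  constructor
  · rintro (hlt | ⟨a', ha', he⟩)
    · omega
    · exact (Fin.val_injective (show (a : ℕ) = (a' : ℕ) by omega)) ▸ ha'
  · intro ha
    exact Or.inr ⟨a, ha, rfl⟩

lemma mem_VF_mid (B : Finset (Fin l)) (b : Fin l) :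
    (⟨k + (b : ℕ), by have := b.isLt; omega⟩ : Fin (2 * k + l)) ∈ VF k l B ↔ b ∈ B := by
  rw [VF, Finset.mem_attachFin, mem_vN]
  simp only [Fin.val_mk]
  constructor
  · rintro (⟨b', hb', he⟩ | ⟨h1, h2⟩)
    · exact (Fin.val_injective (show (b : ℕ) = (b' : ℕ) by omega)) ▸ hb'
    · exfalso
      have := b.isLt
      omega
  · intro hb
    exact Or.inl ⟨b, hb, rfl⟩

lemma psi_inj (hk : 0 < k) (hl : l ≤ k) {A B A' B' : Finset (Fin l)}
    {h : A.card = B.card} {h' : A'.card = B'.card}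
    (he : psi k l A B h = psi k l A' B' h') : A = A' ∧ B = B' := by
  have hEF : EF k l A = EF k l A' := by
    ext x
    rw [up_iff hk hl (h := h) x, up_iff hk hl (h := h') x, he]
  have hVF : VF k l B = VF k l B' := by
    ext y
    rw [vmem_iff hk hl (h := h) y, vmem_iff hk hl (h := h') y, he, hEF]
  constructor
  · ext a
    rw [← mem_EF_mid A a, ← mem_EF_mid A' a, hEF]
  · ext b
    rw [← mem_VF_mid B b, ← mem_VF_mid B' b, hVF]

lemma psi_surj (hk : 0 < k) (hl : l ≤ k) (π : Equiv.Perm (Fin (2 * k + l)))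
    (hav : ¬ HasDecSeq π 3) (hdisp : Disp k π) :
    ∃ (A B : Finset (Fin l)) (h : A.card = B.card), psi k l A B h = π := by
  classical
  have hup_low : ∀ x : Fin (2 * k + l), (x : ℕ) < k → Up k π x := by
    intro x hx
    rcases hdisp x with h | h
    · exact h
    · exfalso; have h' : (π x : ℕ) + k ≤ (x : ℕ) := h; omega
  have hup_highval : ∀ x : Fin (2 * k + l), k + l ≤ (π x : ℕ) → Up k π x := by
    intro x hx
    rcases hdisp x with h | h
    · exact h
    · exfalso
      have h' : (π x : ℕ) + k ≤ (x : ℕ) := h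
      have h2 := x.isLt
      omega
  set A : Finset (Fin l) := Finset.univ.filter
    (fun a : Fin l => ∀ x : Fin (2 * k + l), (x : ℕ) = k + (a : ℕ) → Up k π x) with hA
  set B : Finset (Fin l) := Finset.univ.filter
    (fun b : Fin l => ∀ y : Fin (2 * k + l), (y : ℕ) = k + (b : ℕ) →
      Up k π (π.symm y)) with hB
  have hEFmem : ∀ x : Fin (2 * k + l), x ∈ EF k l A ↔ Up k π x := by
    intro x
    rw [EF, Finset.mem_attachFin, mem_eN]
    constructor
    · rintro (hlt | ⟨a, ha, he⟩)
      · exact hup_low x hlt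
      · rw [hA, Finset.mem_filter] at ha
        exact ha.2 x he
    · intro hup
      have h1 : (x : ℕ) + k ≤ (π x : ℕ) := hup
      have h2 := (π x).isLt
      by_cases hxk : (x : ℕ) < k
      · exact Or.inl hxk
      · refine Or.inr ⟨⟨(x : ℕ) - k, by omega⟩, ?_, by simp only [Fin.val_mk]; omega⟩
        rw [hA, Finset.mem_filter]
        refine ⟨Finset.mem_univ _, fun x' hx' => ?_⟩
        have hxe : x' = x := Fin.ext (by simp only [Fin.val_mk] at hx'; omega)
        rw [hxe]
        exact hup
  have hVFmem : ∀ y : Fin (2 * k + l), y ∈ VF k l B ↔ Up k π (π.symm y) := by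
    intro y
    rw [VF, Finset.mem_attachFin, mem_vN]
    constructor
    · rintro (⟨b, hb, he⟩ | ⟨h1, h2⟩)
      · rw [hB, Finset.mem_filter] at hb
        exact hb.2 y he
      · exact hup_highval (π.symm y) (by rw [Equiv.apply_symm_apply]; exact h1)
    · intro hup
      have h1 : (π.symm y : ℕ) + k ≤ (π (π.symm y) : ℕ) := hup
      rw [Equiv.apply_symm_apply] at h1
      by_cases hyl : (y : ℕ) < k + l
      · refine Or.inl ⟨⟨(y : ℕ) - k, by omega⟩, ?_, by simp only [Fin.val_mk]; omega⟩
        rw [hB, Finset.mem_filter]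
        refine ⟨Finset.mem_univ _, fun y' hy' => ?_⟩
        have hye : y' = y := Fin.ext (by simp only [Fin.val_mk] at hy'; omega)
        rw [hye]
        exact hup
      · exact Or.inr ⟨by omega, y.isLt⟩
  have himg : (EF k l A).image ⇑π = VF k l B := by
    ext y
    rw [Finset.mem_image, hVFmem y]
    constructor
    · rintro ⟨x, hx, rfl⟩
      rw [Equiv.symm_apply_apply]
      exact (hEFmem x).mp hx
    · intro hy
      exact ⟨π.symm y, (hEFmem _).mpr hy, π.apply_symm_apply y⟩
  have himgc : ((EF k l A)ᶜ).image ⇑π = (VF k l B)ᶜ := by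
    ext y
    rw [Finset.mem_image, Finset.mem_compl, hVFmem y]
    constructor
    · rintro ⟨x, hx, rfl⟩
      rw [Finset.mem_compl] at hx
      rw [Equiv.symm_apply_apply]
      exact fun hup => hx ((hEFmem x).mpr hup)
    · intro hy
      exact ⟨π.symm y, Finset.mem_compl.mpr (fun hm => hy ((hEFmem _).mp hm)),
        π.apply_symm_apply y⟩
  have hcard : A.card = B.card := by
    have h1 : (EF k l A).card = (VF k l B).card := by
      rw [← himg, Finset.card_image_of_injective _ π.injective]
    rw [card_EF, card_VF] at h1
    omega
  refine ⟨A, B, hcard, ?_⟩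
  apply Equiv.ext
  intro x
  by_cases hx : x ∈ EF k l A
  · have hmπ : StrictMonoOn (⇑π) ↑(EF k l A) := by
      intro u hu v hv huv
      have hu' : (u : ℕ) + k ≤ (π u : ℕ) := (hEFmem u).mp (Finset.mem_coe.mp hu)
      have hv' : (v : ℕ) + k ≤ (π v : ℕ) := (hEFmem v).mp (Finset.mem_coe.mp hv)
      exact no321_mono_up hav huv (by omega) (by omega)
    have hmψ : StrictMonoOn (⇑(psi k l A B hcard)) ↑(EF k l A) := by
      rw [psi_coe]
      exact glue_strictMonoOn _
    exact eqOn_of_strictMonoOn hmψ hmπ ((psi_image hcard).trans himg.symm) hx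
  · have hxc : x ∈ (EF k l A)ᶜ := Finset.mem_compl.mpr hx
    have hmπ : StrictMonoOn (⇑π) ↑(EF k l A)ᶜ := by
      intro u hu v hv huv
      rw [Finset.coe_compl, Set.mem_compl_iff, Finset.mem_coe] at hu hv
      have hu' : (π u : ℕ) + k ≤ (u : ℕ) := by
        rcases hdisp u with h | h
        · exact absurd ((hEFmem u).mpr h) hu
        · exact h
      have hv' : (π v : ℕ) + k ≤ (v : ℕ) := by
        rcases hdisp v with h | h
        · exact absurd ((hEFmem v).mpr h) hv
        · exact h
      exact no321_mono_dn hav huv (by omega) (by omega)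
    have hmψ : StrictMonoOn (⇑(psi k l A B hcard)) ↑(EF k l A)ᶜ := by
      rw [psi_coe]
      exact glue_strictMonoOn_compl _
    have himgs : ((EF k l A)ᶜ).image ⇑(psi k l A B hcard) = ((EF k l A)ᶜ).image ⇑π :=
      (psi_image_compl hcard).trans himgc.symm
    exact eqOn_of_strictMonoOn hmψ hmπ himgs hxc

/-! ### counting the pairs -/

lemma card_pairs (l : ℕ) :
    Nat.card {q : Finset (Fin l) × Finset (Fin l) // q.1.card = q.2.card}
      = Nat.choose (2 * l) l := by
  classical
  have hcardle : ∀ s : Finset (Fin l), s.card ≤ l := by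
    intro s
    have := Finset.card_le_univ s
    simpa using this
  have hdecomp : ∀ s : Finset (Fin l ⊕ Fin l),
      s = (s.preimage Sum.inl Sum.inl_injective.injOn).map ⟨Sum.inl, Sum.inl_injective⟩ ∪
          (s.preimage Sum.inr Sum.inr_injective.injOn).map ⟨Sum.inr, Sum.inr_injective⟩ := by
    intro s
    ext x
    cases x with
    | inl a => simp [Finset.mem_preimage]
    | inr b => simp [Finset.mem_preimage]
  have hdisj : ∀ (u v : Finset (Fin l)),
      Disjoint (u.map ⟨Sum.inl, Sum.inl_injective⟩) (v.map ⟨Sum.inr, Sum.inr_injective⟩) := by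
    intro u v
    rw [Finset.disjoint_left]
    rintro x hx hx'
    rcases Finset.mem_map.mp hx with ⟨a, _, rfl⟩
    rcases Finset.mem_map.mp hx' with ⟨b, _, hb⟩
    simp at hb
  have e : {q : Finset (Fin l) × Finset (Fin l) // q.1.card = q.2.card}
      ≃ {s : Finset (Fin l ⊕ Fin l) // s.card = l} := by
    refine ⟨fun q => ⟨q.1.1.map ⟨Sum.inl, Sum.inl_injective⟩ ∪
        q.1.2ᶜ.map ⟨Sum.inr, Sum.inr_injective⟩, ?_⟩,
      fun s => ⟨(s.1.preimage Sum.inl Sum.inl_injective.injOn,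
        (s.1.preimage Sum.inr Sum.inr_injective.injOn)ᶜ), ?_⟩, ?_, ?_⟩
    · rw [Finset.card_union_of_disjoint (hdisj _ _), Finset.card_map, Finset.card_map,
        Finset.card_compl]
      have h1 := q.2
      have h2 := hcardle q.1.2
      simp only [Fintype.card_fin]
      omega
    · have h1 := s.2
      have h2 := congrArg Finset.card (hdecomp s.1)
      rw [Finset.card_union_of_disjoint (hdisj _ _), Finset.card_map, Finset.card_map] at h2
      have h3 := hcardle (s.1.preimage Sum.inr Sum.inr_injective.injOn)
      rw [Finset.card_compl]
      simp only [Fintype.card_fin]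
      omega
    · rintro ⟨⟨q1, q2⟩, hq⟩
      apply Subtype.ext
      apply Prod.ext
      · ext a
        simp [Finset.mem_preimage]
      · ext b
        simp [Finset.mem_preimage]
    · rintro ⟨s, hs⟩
      apply Subtype.ext
      simp only [compl_compl]
      exact (hdecomp s).symm
  rw [Nat.card_congr e, Nat.card_eq_fintype_card, Fintype.card_finset_len,
    Fintype.card_sum, Fintype.card_fin, two_mul]

end CKG3



/-- For `0 ≤ ℓ ≤ k`, the number of `k`-good permutations of length `2k + ℓ` is the
central binomial coefficient `C(2ℓ, ℓ)`. -/
theorem count_kGood (k l : ℕ) (hk : 0 < k) (hl : l ≤ k) :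
    Nat.card {π : Equiv.Perm (Fin (2 * k + l)) // ¬ HasDecSeq π 3 ∧ KGood k π} =
      Nat.choose (2 * l) l := by
  classical
  have e1 : {π : Equiv.Perm (Fin (2 * k + l)) // ¬ HasDecSeq π 3 ∧ KGood k π}
      ≃ {π : Equiv.Perm (Fin (2 * k + l)) // ¬ HasDecSeq π 3 ∧ CKG.Disp k π} :=
    Equiv.subtypeEquivRight (fun π => and_congr_right fun hav =>
      ⟨fun hg => disp_of hk hav hg, fun hd => kGood_of hk hl hav hd⟩)
  have hbij : Function.Bijective
      (fun q : {q : Finset (Fin l) × Finset (Fin l) // q.1.card = q.2.card} =>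
        (⟨CKG3.psi k l q.1.1 q.1.2 q.2, CKG3.psi_avoid _ _ _, CKG3.psi_disp hl _ _ _⟩ :
          {π : Equiv.Perm (Fin (2 * k + l)) // ¬ HasDecSeq π 3 ∧ CKG.Disp k π})) := by
    constructor
    · intro q q' he
      have h2 := CKG3.psi_inj hk hl (h := q.2) (h' := q'.2) (congrArg Subtype.val he)
      exact Subtype.ext (Prod.ext h2.1 h2.2)
    · rintro ⟨π, hav, hdisp⟩
      obtain ⟨A, B, h, hpsi⟩ := CKG3.psi_surj hk hl π hav hdisp
      exact ⟨⟨(A, B), h⟩, Subtype.ext hpsi⟩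
  rw [Nat.card_congr (e1.trans (Equiv.ofBijective _ hbij).symm), CKG3.card_pairs]
end

section
/- For every positive integer k, the number of k-good permutations of length 2k + ℓ with ℓ = k + 1 is also C(2ℓ, ℓ) = C(2k+2, k+1). -/
set_option maxHeartbeats 1600000

namespace CountKGood

open Finset

lemma no321 {n : ℕ} {π : Equiv.Perm (Fin n)} (h : ¬ HasDecSeq π 3) {i j l : Fin n}
    (hij : i < j) (hjl : j < l) (h1 : π j < π i) (h2 : π l < π j) : False := by
  apply h
  refine ⟨fun m => if m.val = 0 then i else if m.val = 1 then j else l, ?_, ?_⟩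
  · intro a b hab
    fin_cases a <;> fin_cases b
    · exact absurd hab (by decide)
    · simpa using hij
    · simpa using hij.trans hjl
    · exact absurd hab (by decide)
    · exact absurd hab (by decide)
    · simpa using hjl
    · exact absurd hab (by decide)
    · exact absurd hab (by decide)
    · exact absurd hab (by decide)
  · intro a b hab
    fin_cases a <;> fin_cases b
    · exact absurd hab (by decide)
    · simpa using h1
    · simpa using h2.trans h1
    · exact absurd hab (by decide)
    · exact absurd hab (by decide)
    · simpa using h2
    · exact absurd hab (by decide)
    · exact absurd hab (by decide)
    · exact absurd hab (by decide)


lemma perm_lt_of_not_lt {n : ℕ} (π : Equiv.Perm (Fin n)) {i j : Fin n} (hij : i ≠ j)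
    (h : ¬ π i < π j) : π j < π i :=
  lt_of_le_of_ne (not_lt.1 h) (fun he => hij (π.injective he.symm))

lemma le_card_of_inj {n m : ℕ} {p : Fin n → Prop} [DecidablePred p] (f : Fin m → Fin n)
    (hf : Function.Injective f) (h : ∀ i, p (f i)) :
    m ≤ (Finset.univ.filter p).card := by
  have : (Finset.univ.image f).card = m := by
    rw [Finset.card_image_of_injective _ hf, card_univ, Fintype.card_fin]
  rw [← this]
  apply Finset.card_le_card
  intro x hx
  simp only [Finset.mem_image] at hx
  obtain ⟨i, _, rfl⟩ := hx
  simp [h i]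

lemma filter_val_mem_eq {n : ℕ} (s : Finset ℕ) (h : ∀ m ∈ s, m < n) :
    Finset.univ.filter (fun x : Fin n => (x : ℕ) ∈ s) = s.attachFin h := by
  ext x; simp [Finset.mem_attachFin]

lemma card_filter_val_mem {n : ℕ} (s : Finset ℕ) (h : ∀ m ∈ s, m < n) :
    (Finset.univ.filter (fun x : Fin n => (x : ℕ) ∈ s)).card = s.card := by
  rw [filter_val_mem_eq s h, Finset.card_attachFin]

lemma card_filter_perm {n : ℕ} (π : Equiv.Perm (Fin n)) (p : Fin n → Prop) [DecidablePred p] :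
    (Finset.univ.filter fun x => p (π x)).card = (Finset.univ.filter p).card := by
  apply Finset.card_bij (fun x _ => π x)
  · intro a ha; simp only [Finset.mem_filter] at *; exact ⟨Finset.mem_univ _, ha.2⟩
  · intro a _ b _ hab; exact π.injective hab
  · intro b hb
    refine ⟨π.symm b, ?_, by simp⟩
    simp only [Finset.mem_filter] at *
    simpa using hb.2

lemma eqOn_strictMonoOn {α β : Type*} [LinearOrder α] [LinearOrder β] {s : Finset α}
    {t : Finset β} (hst : t.card = s.card) {f g : α → β}
    (hf : ∀ x ∈ s, ∀ y ∈ s, x < y → f x < f y)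
    (hg : ∀ x ∈ s, ∀ y ∈ s, x < y → g x < g y)
    (hft : ∀ x ∈ s, f x ∈ t) (hgt : ∀ x ∈ s, g x ∈ t) :
    ∀ x ∈ s, f x = g x := by
  intro x hx
  set c := s.card with hc
  have hemb := s.orderEmbOfFin (rfl : s.card = c)
  have hmemb : ∀ i : Fin c, (s.orderEmbOfFin rfl) i ∈ s := fun i =>
    Finset.orderEmbOfFin_mem s rfl i
  have hfm : StrictMono (fun i : Fin c => f (s.orderEmbOfFin rfl i)) := by
    intro a b hab
    exact hf _ (hmemb a) _ (hmemb b) ((s.orderEmbOfFin rfl).strictMono hab)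
  have hgm : StrictMono (fun i : Fin c => g (s.orderEmbOfFin rfl i)) := by
    intro a b hab
    exact hg _ (hmemb a) _ (hmemb b) ((s.orderEmbOfFin rfl).strictMono hab)
  have h1 := Finset.orderEmbOfFin_unique hst (f := fun i : Fin c => f (s.orderEmbOfFin rfl i))
    (fun i => hft _ (hmemb i)) hfm
  have h2 := Finset.orderEmbOfFin_unique hst (f := fun i : Fin c => g (s.orderEmbOfFin rfl i))
    (fun i => hgt _ (hmemb i)) hgm
  have hx' : x ∈ Set.range (s.orderEmbOfFin rfl) := by
    rw [Finset.range_orderEmbOfFin]; exact hx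
  obtain ⟨i, rfl⟩ := hx'
  exact (congrFun h1 i).trans (congrFun h2 i).symm

lemma card_val_lt {n : ℕ} (π : Equiv.Perm (Fin n)) (c : ℕ) (hc : c ≤ n) :
    (Finset.univ.filter fun x => (π x : ℕ) < c).card = c := by
  rw [card_filter_perm π (fun y => (y : ℕ) < c)]
  have h := card_filter_val_mem (n := n) (Finset.Iio c)
    (fun m hm => lt_of_lt_of_le (Finset.mem_Iio.1 hm) hc)
  simp only [Finset.mem_Iio] at h
  rw [h, Nat.card_Iio]

lemma card_val_gt {n : ℕ} (π : Equiv.Perm (Fin n)) (c : ℕ) :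
    (Finset.univ.filter fun x => c < (π x : ℕ)).card = n - c - 1 := by
  rw [card_filter_perm π (fun y => c < (y : ℕ))]
  have h := card_filter_val_mem (n := n) (Finset.Ioo c n)
    (fun m hm => (Finset.mem_Ioo.1 hm).2)
  have : (Finset.univ.filter fun y : Fin n => c < (y : ℕ)) =
      (Finset.univ.filter fun y : Fin n => (y : ℕ) ∈ Finset.Ioo c n) := by
    apply Finset.filter_congr
    intro y _
    simp [Finset.mem_Ioo, y.isLt]
  rw [this, h, Nat.card_Ioo]

lemma card_pos_lt {n : ℕ} (c : ℕ) (hc : c ≤ n) :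
    (Finset.univ.filter fun x : Fin n => (x : ℕ) < c).card = c := by
  have h := card_filter_val_mem (n := n) (Finset.Iio c)
    (fun m hm => lt_of_lt_of_le (Finset.mem_Iio.1 hm) hc)
  simp only [Finset.mem_Iio] at h
  rw [h, Nat.card_Iio]

lemma card_pos_gt {n : ℕ} (c : ℕ) :
    (Finset.univ.filter fun x : Fin n => c < (x : ℕ)).card = n - c - 1 := by
  have h := card_filter_val_mem (n := n) (Finset.Ioo c n)
    (fun m hm => (Finset.mem_Ioo.1 hm).2)
  have : (Finset.univ.filter fun y : Fin n => c < (y : ℕ)) =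
      (Finset.univ.filter fun y : Fin n => (y : ℕ) ∈ Finset.Ioo c n) := by
    apply Finset.filter_congr
    intro y _
    simp [Finset.mem_Ioo, y.isLt]
  rw [this, h, Nat.card_Ioo]

section Completeness

variable {k : ℕ} {π : Equiv.Perm (Fin (2*k+(k+1)))}

/-- If `p` is a low point or a late point, there are `k` points above-left of it. -/
lemma above_left (hk : 0 < k) (hg : KGood k π) (p : Fin (2*k+(k+1)))
    (hp : (π p : ℕ) < k ∨ 2*k < (p : ℕ)) :
    ∃ u : Fin k → Fin (2*k+(k+1)),
      Function.Injective u ∧ ∀ i, u i < p ∧ π p < π (u i) := by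
  obtain ⟨u, v, hu, hv, hpu, hpv, huv, hvu, hcov⟩ := hg p
  rcases hcov with ⟨i0, rfl⟩ | ⟨j0, rfl⟩
  · exfalso
    rcases hp with h | h
    · have hcard : k ≤ (Finset.univ.filter fun x => (π x : ℕ) < (π (u i0) : ℕ)).card :=
        le_card_of_inj v hv.injective (fun j => hvu i0 j)
      rw [card_val_lt π _ (π (u i0)).isLt.le] at hcard
      omega
    · have hcard : k ≤ (Finset.univ.filter fun x : Fin (2*k+(k+1)) => ((u i0 : ℕ)) < (x : ℕ)).card :=
        le_card_of_inj v hv.injective (fun j => huv i0 j)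
      rw [card_pos_gt] at hcard
      omega
  · exact ⟨u, hu.injective, fun i => ⟨huv i j0, hvu i j0⟩⟩

/-- If `p` is an early point or the point of maximal value, there are `k` points
below-right of it. -/
lemma below_right (hk : 0 < k) (hg : KGood k π) (p : Fin (2*k+(k+1)))
    (hp : (p : ℕ) < k ∨ (π p : ℕ) = 3*k) :
    ∃ v : Fin k → Fin (2*k+(k+1)),
      Function.Injective v ∧ ∀ j, p < v j ∧ π (v j) < π p := by
  obtain ⟨u, v, hu, hv, hpu, hpv, huv, hvu, hcov⟩ := hg p
  rcases hcov with ⟨i0, rfl⟩ | ⟨j0, rfl⟩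
  · exact ⟨v, hv.injective, fun j => ⟨huv i0 j, hvu i0 j⟩⟩
  · exfalso
    rcases hp with h | h
    · have hcard : k ≤ (Finset.univ.filter fun x : Fin (2*k+(k+1)) => (x : ℕ) < ((v j0 : ℕ))).card :=
        le_card_of_inj u hu.injective (fun i => huv i j0)
      rw [card_pos_lt _ (v j0).isLt.le] at hcard
      omega
    · have hcard : k ≤ (Finset.univ.filter fun x => (π (v j0) : ℕ) < (π x : ℕ)).card :=
        le_card_of_inj u hu.injective (fun i => hvu i j0)
      rw [card_val_gt] at hcard
      omega

/-- Points at positions `< k` have high values. -/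
lemma posS_high (hk : 0 < k) (hg : KGood k π) (p : Fin (2*k+(k+1)))
    (hp : (p : ℕ) < k) : k ≤ (π p : ℕ) := by
  obtain ⟨v, hvinj, hv⟩ := below_right hk hg p (Or.inl hp)
  have hcard : k ≤ (Finset.univ.filter fun x => (π x : ℕ) < (π p : ℕ)).card :=
    le_card_of_inj v hvinj (fun j => (hv j).2)
  rw [card_val_lt π _ (π p).isLt.le] at hcard
  exact hcard

/-- Low points are at positions `≥ k`. -/
lemma lows_late (hk : 0 < k) (hg : KGood k π) (p : Fin (2*k+(k+1)))
    (hp : (π p : ℕ) < k) : k ≤ (p : ℕ) := by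
  obtain ⟨u, huinj, hu⟩ := above_left hk hg p (Or.inl hp)
  have hcard : k ≤ (Finset.univ.filter fun x : Fin (2*k+(k+1)) => (x : ℕ) < (p : ℕ)).card :=
    le_card_of_inj u huinj (fun i => (hu i).1)
  rw [card_pos_lt _ p.isLt.le] at hcard
  exact hcard

/-- Low points appear in increasing order. -/
lemma lows_mono (hk : 0 < k) (hd : ¬ HasDecSeq π 3) (hg : KGood k π)
    {i j : Fin (2*k+(k+1))} (hij : i < j) (hi : (π i : ℕ) < k) (hj : (π j : ℕ) < k) :
    π i < π j := by
  by_contra hc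
  have hne : π j ≠ π i := fun h => absurd (π.injective h) (ne_of_gt hij)
  have hji : π j < π i := lt_of_le_of_ne (not_lt.1 hc) hne
  have h0 : (⟨0, by omega⟩ : Fin (2*k+(k+1))) < i := by
    have := lows_late hk hg i hi
    rw [Fin.lt_def]
    simp only
    omega
  have h0v : π i < π ⟨0, by omega⟩ := by
    have := posS_high hk hg ⟨0, by omega⟩ (by simpa using hk)
    rw [Fin.lt_def]
    omega
  exact no321 hd h0 hij h0v hji

/-- The first `k` points appear in increasing order. -/
lemma first_mono (hk : 0 < k) (hd : ¬ HasDecSeq π 3) (hg : KGood k π)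
    {i j : Fin (2*k+(k+1))} (hij : i < j) (hj : (j : ℕ) < k) :
    π i < π j := by
  by_contra hc
  have hne : π j ≠ π i := fun h => absurd (π.injective h) (ne_of_gt hij)
  have hji : π j < π i := lt_of_le_of_ne (not_lt.1 hc) hne
  set z := π.symm ⟨0, by omega⟩ with hz
  have hzv : (π z : ℕ) = 0 := by rw [hz]; simp
  have hzpos : k ≤ (z : ℕ) := lows_late hk hg z (by omega)
  have hjz : j < z := by rw [Fin.lt_def]; omega
  have hjv : π z < π j := by
    rw [Fin.lt_def, hzv]
    have := posS_high hk hg j hj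
    omega
  exact no321 hd hij hjz hji hjv

/-- Late points have low values. -/
lemma late_low (hk : 0 < k) (hg : KGood k π) (p : Fin (2*k+(k+1)))
    (hp : 2*k < (p : ℕ)) : (π p : ℕ) ≤ 2*k := by
  obtain ⟨u, huinj, hu⟩ := above_left hk hg p (Or.inr hp)
  have hcard : k ≤ (Finset.univ.filter fun x => (π p : ℕ) < (π x : ℕ)).card :=
    le_card_of_inj u huinj (fun i => (hu i).2)
  rw [card_val_gt] at hcard
  omega

/-- The point of maximal value is at position `≤ 2k`. -/
lemma top_early (hk : 0 < k) (hg : KGood k π) :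
    ((π.symm ⟨3*k, by omega⟩ : Fin (2*k+(k+1))) : ℕ) ≤ 2*k := by
  set t := π.symm ⟨3*k, by omega⟩ with ht
  have htv : (π t : ℕ) = 3*k := by rw [ht]; simp
  obtain ⟨v, hvinj, hv⟩ := below_right hk hg t (Or.inr htv)
  have hcard : k ≤ (Finset.univ.filter fun x : Fin (2*k+(k+1)) => (t : ℕ) < (x : ℕ)).card :=
    le_card_of_inj v hvinj (fun j => (hv j).1)
  rw [card_pos_gt] at hcard
  omega

/-- Points after position `2k` appear in increasing order. -/
lemma tail_mono (hk : 0 < k) (hd : ¬ HasDecSeq π 3) (hg : KGood k π)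
    {i j : Fin (2*k+(k+1))} (hij : i < j) (hi : 2*k < (i : ℕ)) :
    π i < π j := by
  by_contra hc
  have hne : π j ≠ π i := fun h => absurd (π.injective h) (ne_of_gt hij)
  have hji : π j < π i := lt_of_le_of_ne (not_lt.1 hc) hne
  set t := π.symm ⟨3*k, by omega⟩ with ht
  have htv : (π t : ℕ) = 3*k := by rw [ht]; simp
  have hti : t < i := by
    have := top_early hk hg
    rw [Fin.lt_def]
    omega
  have hiv : π i < π t := by
    rw [Fin.lt_def, htv]
    have h1 : (π i : ℕ) ≤ 2*k := late_low hk hg i hi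
    omega
  exact no321 hd hti hij hiv hji

end Completeness

lemma card_pos_ge {n : ℕ} (c : ℕ) (hc : c ≤ n) :
    (Finset.univ.filter fun x : Fin n => c ≤ (x : ℕ)).card = n - c := by
  have h1 := Finset.card_filter_add_card_filter_not
    (s := (Finset.univ : Finset (Fin n))) (p := fun x => (x : ℕ) < c)
  have h2 : (Finset.univ.filter fun x : Fin n => c ≤ (x : ℕ)) =
      Finset.univ.filter (fun x : Fin n => ¬ (x : ℕ) < c) := by
    apply Finset.filter_congr; intro x _; simp [not_lt]
  rw [h2]
  rw [card_pos_lt c hc] at h1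
  simp only [Finset.card_univ, Fintype.card_fin] at h1
  omega

/-- The staircase shape: `P` is the set of positions in the window `[k, 2k]`
carrying the top values, `C` is the set of values sitting at the final positions. -/
def Stairs (k : ℕ) (P C : Finset ℕ) (π : Equiv.Perm (Fin (2*k+(k+1)))) : Prop :=
  P ⊆ Finset.Icc k (2*k) ∧ C ⊆ Finset.Icc k (2*k) ∧ P.card + C.card = k + 1 ∧
  (∀ i : Fin (2*k+(k+1)), (i : ℕ) < k →
      k ≤ (π i : ℕ) ∧ (π i : ℕ) ≤ 3*k - P.card ∧ (π i : ℕ) ∉ C) ∧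
  (∀ i : Fin (2*k+(k+1)), (i : ℕ) ∈ P → 3*k - P.card < (π i : ℕ)) ∧
  (∀ i : Fin (2*k+(k+1)), k ≤ (i : ℕ) → (i : ℕ) < 2*k + P.card → (i : ℕ) ∉ P →
      (π i : ℕ) < k) ∧
  (∀ i : Fin (2*k+(k+1)), 2*k + P.card ≤ (i : ℕ) → (π i : ℕ) ∈ C) ∧
  (∀ i j : Fin (2*k+(k+1)), i < j → (j : ℕ) < k → π i < π j) ∧
  (∀ i j : Fin (2*k+(k+1)), i < j → (i : ℕ) ∈ P → (j : ℕ) ∈ P → π i < π j) ∧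
  (∀ i j : Fin (2*k+(k+1)), i < j → (π i : ℕ) < k → (π j : ℕ) < k → π i < π j) ∧
  (∀ i j : Fin (2*k+(k+1)), i < j → 2*k + P.card ≤ (i : ℕ) → π i < π j)

section CompleteA

variable {k : ℕ} {π : Equiv.Perm (Fin (2*k+(k+1)))}

lemma extras_card (hk : 0 < k) (hg : KGood k π) :
    (Finset.univ.filter fun x : Fin (2*k+(k+1)) => k ≤ (x : ℕ) ∧ k ≤ (π x : ℕ)).card
      = k + 1 := by
  have h1 := Finset.card_filter_add_card_filter_not
    (s := (Finset.univ : Finset (Fin (2*k+(k+1))))) (p := fun x => (π x : ℕ) < k)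
  rw [card_val_lt π k (by omega)] at h1
  simp only [Finset.card_univ, Fintype.card_fin] at h1
  -- the high positions
  set A := Finset.univ.filter (fun x : Fin (2*k+(k+1)) => ¬ (π x : ℕ) < k) with hA
  have hAcard : A.card = 2*k + 1 := by omega
  have h2 := Finset.card_filter_add_card_filter_not
    (s := A) (p := fun x => (x : ℕ) < k)
  have h3 : A.filter (fun x : Fin (2*k+(k+1)) => (x : ℕ) < k) =
      Finset.univ.filter (fun x : Fin (2*k+(k+1)) => (x : ℕ) < k) := by
    ext x
    simp only [hA, Finset.mem_filter, Finset.filter_filter, Finset.mem_univ, true_and]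
    exact ⟨fun h => h.2, fun h => ⟨not_lt.2 (posS_high hk hg x h), h⟩⟩
  have h4 : A.filter (fun x : Fin (2*k+(k+1)) => ¬ (x : ℕ) < k) =
      Finset.univ.filter fun x : Fin (2*k+(k+1)) => k ≤ (x : ℕ) ∧ k ≤ (π x : ℕ) := by
    ext x
    simp only [hA, Finset.mem_filter, Finset.filter_filter, Finset.mem_univ, true_and, not_lt]
    tauto
  rw [h3, h4, card_pos_lt k (by omega)] at h2
  omega

lemma completeness_A (hk : 0 < k) (hd : ¬ HasDecSeq π 3) (hg : KGood k π)
    (hA : (π ⟨k-1, by omega⟩ : ℕ) = 3*k) :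
    Stairs k ∅ (Finset.Icc k (2*k)) π := by
  have hne : ∀ h : Fin (2*k+(k+1)), k ≤ (h : ℕ) → (π h : ℕ) < 3*k := by
    intro h hh
    have h1 : (π h : ℕ) < 2*k+(k+1) := (π h).isLt
    rcases Nat.lt_or_ge (π h : ℕ) (3*k) with h' | h'
    · exact h'
    have h2 : (π h : ℕ) = (π ⟨k-1, by omega⟩ : ℕ) := by rw [hA]; omega
    have h4 := π.injective (Fin.ext h2)
    have h5 := congrArg Fin.val h4
    simp only at h5
    omega
  -- A1 : all lows lie before every extra point
  have A1 : ∀ h : Fin (2*k+(k+1)), k ≤ (h : ℕ) → k ≤ (π h : ℕ) →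
      ∀ x : Fin (2*k+(k+1)), (π x : ℕ) < k → x < h := by
    intro h hh hhv x hx
    by_contra hc
    have hxh : h < x := by
      refine lt_of_le_of_ne (not_lt.1 hc) ?_
      intro he
      rw [he] at hhv
      omega
    have e1 : (⟨k-1, by omega⟩ : Fin (2*k+(k+1))) < h := by rw [Fin.lt_def]; simp; omega
    have e2 : π h < π ⟨k-1, by omega⟩ := by rw [Fin.lt_def, hA]; exact hne h hh
    have e3 : π x < π h := by rw [Fin.lt_def]; omega
    exact no321 hd e1 hxh e2 e3
  -- A2 : extras live at positions ≥ 2k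
  have A2 : ∀ h : Fin (2*k+(k+1)), k ≤ (h : ℕ) → k ≤ (π h : ℕ) → 2*k ≤ (h : ℕ) := by
    intro h hh hhv
    have hsub : (Finset.univ.filter fun x : Fin (2*k+(k+1)) => (x : ℕ) < k) ∪
        (Finset.univ.filter fun x : Fin (2*k+(k+1)) => (π x : ℕ) < k) ⊆
        Finset.univ.filter fun x : Fin (2*k+(k+1)) => (x : ℕ) < (h : ℕ) := by
      intro x hx
      simp only [Finset.mem_union, Finset.mem_filter, Finset.mem_univ, true_and] at hx ⊢
      rcases hx with h' | h'
      · omega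
      · exact A1 h hh hhv x h'
    have hdisj : Disjoint (Finset.univ.filter fun x : Fin (2*k+(k+1)) => (x : ℕ) < k)
        (Finset.univ.filter fun x : Fin (2*k+(k+1)) => (π x : ℕ) < k) := by
      rw [Finset.disjoint_left]
      intro x h1 h2
      simp only [Finset.mem_filter, Finset.mem_univ, true_and] at h1 h2
      have := posS_high hk hg x h1
      omega
    have := Finset.card_le_card hsub
    rw [Finset.card_union_of_disjoint hdisj, card_pos_lt k (by omega),
      card_val_lt π k (by omega), card_pos_lt (h : ℕ) h.isLt.le] at this
    omega
  -- A2b : all positions ≥ 2k are extras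
  have hS2k : (Finset.univ.filter fun x : Fin (2*k+(k+1)) => k ≤ (x : ℕ) ∧ k ≤ (π x : ℕ)) =
      Finset.univ.filter fun x : Fin (2*k+(k+1)) => 2*k ≤ (x : ℕ) := by
    apply Finset.eq_of_subset_of_card_le
    · intro x hx
      simp only [Finset.mem_filter, Finset.mem_univ, true_and] at hx ⊢
      exact A2 x hx.1 hx.2
    · rw [card_pos_ge (2*k) (by omega), extras_card hk hg]
      omega
  have A2b : ∀ p : Fin (2*k+(k+1)), 2*k ≤ (p : ℕ) → k ≤ (π p : ℕ) := by
    intro p hp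
    have : p ∈ Finset.univ.filter fun x : Fin (2*k+(k+1)) => k ≤ (x : ℕ) ∧ k ≤ (π x : ℕ) := by
      rw [hS2k]
      simp only [Finset.mem_filter, Finset.mem_univ, true_and]
      exact hp
    simp only [Finset.mem_filter, Finset.mem_univ, true_and] at this
    exact this.2
  -- A3 : the extras appear in increasing order
  have A3 : ∀ i j : Fin (2*k+(k+1)), i < j → 2*k ≤ (i : ℕ) → π i < π j := by
    intro i j hij hi
    by_contra hc
    have hji : π j < π i := perm_lt_of_not_lt π (ne_of_lt hij) hc
    have e1 : (⟨k-1, by omega⟩ : Fin (2*k+(k+1))) < i := by rw [Fin.lt_def]; simp; omega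
    have e2 : π i < π ⟨k-1, by omega⟩ := by
      rw [Fin.lt_def, hA]; exact hne i (by omega)
    exact no321 hd e1 hij e2 hji
  -- A4 : each extra value is below each of the first k values
  have A4 : ∀ h : Fin (2*k+(k+1)), 2*k ≤ (h : ℕ) →
      ∀ s : Fin (2*k+(k+1)), (s : ℕ) < k → π h < π s := by
    intro h hh s hs
    obtain ⟨u, v, hu, hv, hpu, hpv, huv, hvu, hcov⟩ := hg h
    rcases hcov with ⟨i0, hi0⟩ | ⟨j0, hj0⟩
    · exfalso
      -- k points of v lie after h, so h = 2k exactly and v fills the tail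
      have himg : (Finset.univ.image v) ⊆
          Finset.univ.filter fun x : Fin (2*k+(k+1)) => (h : ℕ) < (x : ℕ) := by
        intro x hx
        simp only [Finset.mem_image] at hx
        obtain ⟨j, _, rfl⟩ := hx
        simp only [Finset.mem_filter, Finset.mem_univ, true_and]
        have := huv i0 j
        rw [hi0] at this
        exact this
      have hcard1 : (Finset.univ.image v).card = k := by
        rw [Finset.card_image_of_injective _ hv.injective, Finset.card_univ, Fintype.card_fin]
      have hcard2 : (Finset.univ.filter fun x : Fin (2*k+(k+1)) => (h : ℕ) < (x : ℕ)).card =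
          3*k - (h : ℕ) := by
        rw [card_pos_gt]; omega
      have hh2k : (h : ℕ) = 2*k := by
        have := Finset.card_le_card himg
        omega
      have heq : (Finset.univ.image v) =
          Finset.univ.filter fun x : Fin (2*k+(k+1)) => (h : ℕ) < (x : ℕ) := by
        apply Finset.eq_of_subset_of_card_le himg
        rw [hcard1, hcard2, hh2k]
        omega
      have hx : (⟨2*k+1, by omega⟩ : Fin (2*k+(k+1))) ∈ Finset.univ.image v := by
        rw [Finset.ext_iff] at heq
        rw [heq ⟨2*k+1, by omega⟩]
        simp only [Finset.mem_filter, Finset.mem_univ, true_and]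
        show (h : ℕ) < 2*k+1
        omega
      simp only [Finset.mem_image] at hx
      obtain ⟨j1, _, hj1⟩ := hx
      have h1 : π ⟨2*k+1, by omega⟩ < π h := by rw [← hj1, ← hi0]; exact hvu i0 j1
      have h2 : π h < π ⟨2*k+1, by omega⟩ := A3 h ⟨2*k+1, by omega⟩
        (by rw [Fin.lt_def]; show (h : ℕ) < 2*k+1; omega) hh
      exact absurd h1 (not_lt.2 h2.le)
    · -- h in v-side: the chain u must be exactly the first k positions
      have hmemu : ∀ i, (u i : ℕ) < k := by
        intro i
        by_contra hc
        have hui : k ≤ (u i : ℕ) := not_lt.1 hc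
        have huih : u i < h := by rw [← hj0]; exact huv i j0
        have hpuih : π h < π (u i) := by rw [← hj0]; exact hvu i j0
        have hkv : k ≤ (π (u i) : ℕ) := by
          have := A2b h hh
          rw [Fin.lt_def] at hpuih
          omega
        have h2k : 2*k ≤ (u i : ℕ) := A2 (u i) hui hkv
        have := A3 (u i) h huih h2k
        exact absurd hpuih (not_lt.2 this.le)
      have heq : (Finset.univ.image u) =
          Finset.univ.filter fun x : Fin (2*k+(k+1)) => (x : ℕ) < k := by
        apply Finset.eq_of_subset_of_card_le
        · intro x hx
          simp only [Finset.mem_image] at hx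
          obtain ⟨i, _, rfl⟩ := hx
          simp only [Finset.mem_filter, Finset.mem_univ, true_and]
          exact hmemu i
        · rw [Finset.card_image_of_injective _ hu.injective, Finset.card_univ,
            Fintype.card_fin, card_pos_lt k (by omega)]
      have hs' : s ∈ Finset.univ.image u := by
        rw [heq]; simp only [Finset.mem_filter, Finset.mem_univ, true_and]; exact hs
      simp only [Finset.mem_image] at hs'
      obtain ⟨i1, _, hi1⟩ := hs'
      rw [← hi1, ← hj0]
      exact hvu i1 j0
  -- A5 : the first k values are all ≥ 2k+1
  have A5 : ∀ s : Fin (2*k+(k+1)), (s : ℕ) < k → 2*k+1 ≤ (π s : ℕ) := by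
    intro s hs
    have hsub : (Finset.univ.filter fun x : Fin (2*k+(k+1)) => (π x : ℕ) < k) ∪
        (Finset.univ.filter fun x : Fin (2*k+(k+1)) => k ≤ (x : ℕ) ∧ k ≤ (π x : ℕ)) ⊆
        Finset.univ.filter fun x : Fin (2*k+(k+1)) => (π x : ℕ) < (π s : ℕ) := by
      intro x hx
      simp only [Finset.mem_union, Finset.mem_filter, Finset.mem_univ, true_and] at hx ⊢
      rcases hx with h' | h'
      · have := posS_high hk hg s hs
        omega
      · have h2k := A2 x h'.1 h'.2
        have := A4 x h2k s hs
        rw [Fin.lt_def] at this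
        omega
    have hdisj : Disjoint (Finset.univ.filter fun x : Fin (2*k+(k+1)) => (π x : ℕ) < k)
        (Finset.univ.filter fun x : Fin (2*k+(k+1)) => k ≤ (x : ℕ) ∧ k ≤ (π x : ℕ)) := by
      rw [Finset.disjoint_left]
      intro x h1 h2
      simp only [Finset.mem_filter, Finset.mem_univ, true_and] at h1 h2
      omega
    have := Finset.card_le_card hsub
    rw [Finset.card_union_of_disjoint hdisj, card_val_lt π k (by omega),
      extras_card hk hg, card_val_lt π _ (π s).isLt.le] at this
    omega
  -- assemble
  refine ⟨Finset.empty_subset _, le_refl _, ?_, ?_, ?_, ?_, ?_, ?_, ?_, ?_, ?_⟩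
  · simp [Nat.card_Icc]; omega
  · intro i hi
    have h5 := A5 i hi
    have h6 := (π i).isLt
    refine ⟨by omega, by simp; omega, ?_⟩
    simp only [Finset.mem_Icc]
    omega
  · intro i hi; simp at hi
  · intro i h1 h2 h3
    simp only [Finset.card_empty, Nat.add_zero] at h2
    by_contra hc
    have := A2 i h1 (not_lt.1 hc)
    omega
  · intro i hi
    simp only [Finset.card_empty, Nat.add_zero] at hi
    simp only [Finset.mem_Icc]
    refine ⟨A2b i hi, ?_⟩
    have hcard : k ≤ (Finset.univ.filter
        fun x => (π i : ℕ) < (π x : ℕ)).card := by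
      apply le_card_of_inj (fun m : Fin k => (⟨(m : ℕ), by omega⟩ : Fin (2*k+(k+1))))
      · intro a b hab
        rw [Fin.ext_iff] at hab ⊢
        simpa using hab
      · intro m
        have := A4 i hi ⟨(m : ℕ), by omega⟩ (by simpa using m.isLt)
        rw [Fin.lt_def] at this
        exact this
    rw [card_val_gt] at hcard
    omega
  · intro i j hij hj; exact first_mono hk hd hg hij hj
  · intro i j _ hi _; simp at hi
  · intro i j hij h1 h2; exact lows_mono hk hd hg hij h1 h2
  · intro i j hij hi
    simp only [Finset.card_empty, Nat.add_zero] at hi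
    exact A3 i j hij hi

end CompleteA

section CompleteB

variable {k : ℕ} {π : Equiv.Perm (Fin (2*k+(k+1)))}

lemma completeness_B (hk : 0 < k) (hd : ¬ HasDecSeq π 3) (hg : KGood k π)
    (hB : (π ⟨k-1, by omega⟩ : ℕ) ≠ 3*k) :
    ∃ P C : Finset ℕ, Stairs k P C π := by
  classical
  set W : Finset (Fin (2*k+(k+1))) :=
    Finset.univ.filter (fun x => k ≤ (x : ℕ) ∧ (x : ℕ) ≤ 2*k ∧ k ≤ (π x : ℕ)) with hWdef
  have hWmem : ∀ x : Fin (2*k+(k+1)),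
      x ∈ W ↔ k ≤ (x : ℕ) ∧ (x : ℕ) ≤ 2*k ∧ k ≤ (π x : ℕ) := by
    intro x; simp [hWdef]
  set maxS : ℕ := (π ⟨k-1, by omega⟩ : ℕ) with hmaxSdef
  have hmaxlt : maxS < 3*k := by
    have := (π (⟨k-1, by omega⟩ : Fin (2*k+(k+1)))).isLt
    rcases Nat.lt_or_ge maxS (3*k) with h | h
    · exact h
    · exfalso; apply hB; omega
  have hmax : ∀ x : Fin (2*k+(k+1)), (x : ℕ) < k → (π x : ℕ) ≤ maxS := by
    intro x hx
    rcases Nat.lt_or_ge (x : ℕ) (k-1) with h | h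
    · have := first_mono hk hd hg (i := x) (j := ⟨k-1, by omega⟩)
        (by rw [Fin.lt_def]; simp; omega) (by simp; omega)
      rw [Fin.lt_def] at this
      omega
    · have hxk : (x : ℕ) = k - 1 := by omega
      have : x = (⟨k-1, by omega⟩ : Fin (2*k+(k+1))) := Fin.ext (by simpa using hxk)
      rw [hmaxSdef, this]
  -- the top point
  set t : Fin (2*k+(k+1)) := π.symm ⟨3*k, by omega⟩ with htdef
  have htv : (π t : ℕ) = 3*k := by rw [htdef]; simp
  have htge : k ≤ (t : ℕ) := by
    by_contra hc
    have := hmax t (not_le.1 hc)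
    omega
  have htle : (t : ℕ) ≤ 2*k := top_early hk hg
  have htW : t ∈ W := (hWmem t).2 ⟨htge, htle, by omega⟩
  -- B1 : window extras have values above maxS
  have B1 : ∀ w ∈ W, maxS < (π w : ℕ) := by
    intro w hw
    rw [hWmem] at hw
    obtain ⟨hw1, hw2, hw3⟩ := hw
    by_contra hc
    have hwne : (π w : ℕ) ≠ maxS := by
      intro he
      have : w = (⟨k-1, by omega⟩ : Fin (2*k+(k+1))) := π.injective (Fin.ext he)
      have := congrArg Fin.val this
      simp only at this
      omega
    have hwlt : (π w : ℕ) < maxS := by omega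
    -- all lows are before w
    have hlows : ∀ x : Fin (2*k+(k+1)), (π x : ℕ) < k → x < w := by
      intro x hx
      by_contra hc2
      have hwx : w < x := by
        refine lt_of_le_of_ne (not_lt.1 hc2) ?_
        intro he
        rw [he] at hw3
        omega
      exact no321 hd (i := ⟨k-1, by omega⟩) (by rw [Fin.lt_def]; simp; omega) hwx
        (by rw [Fin.lt_def]; simp only [hmaxSdef] at hwlt ⊢; omega)
        (by rw [Fin.lt_def]; omega)
    have hsub : (Finset.univ.filter fun x : Fin (2*k+(k+1)) => (x : ℕ) < k) ∪
        (Finset.univ.filter fun x : Fin (2*k+(k+1)) => (π x : ℕ) < k) ⊆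
        Finset.univ.filter fun x : Fin (2*k+(k+1)) => (x : ℕ) < (w : ℕ) := by
      intro x hx
      simp only [Finset.mem_union, Finset.mem_filter, Finset.mem_univ, true_and] at hx ⊢
      rcases hx with h' | h'
      · omega
      · have := hlows x h'
        rw [Fin.lt_def] at this
        exact this
    have hdisj : Disjoint (Finset.univ.filter fun x : Fin (2*k+(k+1)) => (x : ℕ) < k)
        (Finset.univ.filter fun x : Fin (2*k+(k+1)) => (π x : ℕ) < k) := by
      rw [Finset.disjoint_left]
      intro x h1 h2
      simp only [Finset.mem_filter, Finset.mem_univ, true_and] at h1 h2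
      have := posS_high hk hg x h1
      omega
    have hcard := Finset.card_le_card hsub
    rw [Finset.card_union_of_disjoint hdisj, card_pos_lt k (by omega),
      card_val_lt π k (by omega), card_pos_lt (w : ℕ) w.isLt.le] at hcard
    have hw2k : (w : ℕ) = 2*k := by omega
    -- then every position in [k, 2k) is low, contradicting the position of t
    have heq : (Finset.univ.filter fun x : Fin (2*k+(k+1)) => (x : ℕ) < k) ∪
        (Finset.univ.filter fun x : Fin (2*k+(k+1)) => (π x : ℕ) < k) =
        Finset.univ.filter fun x : Fin (2*k+(k+1)) => (x : ℕ) < (w : ℕ) := by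
      apply Finset.eq_of_subset_of_card_le hsub
      rw [Finset.card_union_of_disjoint hdisj, card_pos_lt k (by omega),
        card_val_lt π k (by omega), card_pos_lt (w : ℕ) w.isLt.le, hw2k]
      omega
    have htw : t ≠ w := by
      intro he
      rw [← he] at hwlt
      omega
    have htlt : (t : ℕ) < (w : ℕ) := by
      rw [hw2k]
      rcases Nat.lt_or_ge (t : ℕ) (2*k) with h' | h'
      · exact h'
      · exfalso; exact htw (Fin.ext (by omega))
    have : t ∈ (Finset.univ.filter fun x : Fin (2*k+(k+1)) => (x : ℕ) < k) ∪
        (Finset.univ.filter fun x : Fin (2*k+(k+1)) => (π x : ℕ) < k) := by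
      rw [heq]
      simp only [Finset.mem_filter, Finset.mem_univ, true_and]
      exact htlt
    simp only [Finset.mem_union, Finset.mem_filter, Finset.mem_univ, true_and] at this
    rcases this with h' | h'
    · omega
    · omega
  -- B3 : all lows are before each tail extra
  have B3 : ∀ e : Fin (2*k+(k+1)), 2*k < (e : ℕ) → k ≤ (π e : ℕ) →
      ∀ x : Fin (2*k+(k+1)), (π x : ℕ) < k → x < e := by
    intro e he hev x hx
    by_contra hc
    have hex : e < x := by
      refine lt_of_le_of_ne (not_lt.1 hc) ?_
      intro hh
      rw [hh] at hev
      omega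
    have hte : t < e := by rw [Fin.lt_def]; omega
    have hne : (π e : ℕ) ≠ 3*k := by
      intro hh
      have : e = t := π.injective (Fin.ext (by rw [htv, hh]))
      have := congrArg Fin.val this
      omega
    exact no321 hd hte hex (by rw [Fin.lt_def]; omega) (by rw [Fin.lt_def]; omega)
  -- B4 : tail extras have values below all window extras
  have B4 : ∀ e : Fin (2*k+(k+1)), 2*k < (e : ℕ) → k ≤ (π e : ℕ) →
      ∀ w ∈ W, (π e : ℕ) < (π w : ℕ) := by
    intro e he hev w hw
    by_contra hc
    have hwe : (π w : ℕ) < (π e : ℕ) := by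
      rcases Nat.lt_or_ge (π w : ℕ) (π e : ℕ) with h' | h'
      · exact h'
      · exfalso
        have hne : π w ≠ π e := by
          intro hh
          have : w = e := π.injective hh
          have := congrArg Fin.val this
          rw [hWmem] at hw
          omega
        have : (π w : ℕ) ≠ (π e : ℕ) := fun hh => hne (Fin.ext hh)
        omega
    obtain ⟨u, huinj, hu⟩ := above_left hk hg e (Or.inr he)
    have huW : ∀ i, u i ∈ W := by
      intro i
      obtain ⟨hue, huev⟩ := hu i
      rw [Fin.lt_def] at hue huev
      rw [hWmem]
      rcases Nat.lt_or_ge ((u i : ℕ)) k with h' | h'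
      · exfalso
        have h1 := hmax (u i) h'
        have h2 := B1 w hw
        omega
      rcases Nat.lt_or_ge (2*k) ((u i : ℕ)) with h'' | h''
      · exfalso
        have := tail_mono hk hd hg (i := u i) (j := e) (by rw [Fin.lt_def]; omega) h''
        rw [Fin.lt_def] at this
        omega
      · exact ⟨h', h'', by omega⟩
    -- extras count contradiction
    have hsub : insert e (insert w (Finset.univ.image u)) ⊆
        Finset.univ.filter fun x : Fin (2*k+(k+1)) => k ≤ (x : ℕ) ∧ k ≤ (π x : ℕ) := by
      intro x hx
      simp only [Finset.mem_insert, Finset.mem_image, Finset.mem_univ, true_and] at hx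
      simp only [Finset.mem_filter, Finset.mem_univ, true_and]
      rcases hx with rfl | rfl | ⟨i, rfl⟩
      · exact ⟨by omega, hev⟩
      · rw [hWmem] at hw; exact ⟨hw.1, hw.2.2⟩
      · have := (huW i)
        rw [hWmem] at this
        exact ⟨this.1, this.2.2⟩
    have hew : e ∉ insert w (Finset.univ.image u) := by
      simp only [Finset.mem_insert, Finset.mem_image, Finset.mem_univ, true_and, not_or]
      constructor
      · intro hh
        rw [hWmem] at hw
        have := congrArg Fin.val hh
        omega
      · rintro ⟨i, hi⟩
        obtain ⟨h1, h2⟩ := hu i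
        rw [hi] at h2
        exact absurd h2 (lt_irrefl _)
    have hwim : w ∉ Finset.univ.image u := by
      simp only [Finset.mem_image, Finset.mem_univ, true_and, not_exists]
      intro i hi
      obtain ⟨h1, h2⟩ := hu i
      rw [hi, Fin.lt_def] at h2
      omega
    have hcard := Finset.card_le_card hsub
    rw [Finset.card_insert_of_notMem hew, Finset.card_insert_of_notMem hwim,
      Finset.card_image_of_injective _ huinj, Finset.card_univ, Fintype.card_fin,
      extras_card hk hg] at hcard
    omega
  -- B5 : window extras are increasing
  have B5 : ∀ i j : Fin (2*k+(k+1)), i < j → i ∈ W → j ∈ W → π i < π j := by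
    intro i j hij hiW hjW
    by_contra hc
    have hji := perm_lt_of_not_lt π (ne_of_lt hij) hc
    have hjx : j < (⟨3*k, by omega⟩ : Fin (2*k+(k+1))) := by
      rw [Fin.lt_def]
      rw [hWmem] at hjW
      simp only
      omega
    have hπx : π ⟨3*k, by omega⟩ < π j := by
      rw [Fin.lt_def]
      by_cases hxv : k ≤ (π (⟨3*k, by omega⟩ : Fin (2*k+(k+1))) : ℕ)
      · exact B4 ⟨3*k, by omega⟩ (by simp; omega) hxv j hjW
      · rw [hWmem] at hjW
        omega
    exact no321 hd hij hjx hji hπx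
  -- counting window and tail extras
  set a : ℕ := W.card with hadef
  have halb : 1 ≤ a := Finset.card_pos.2 ⟨t, htW⟩
  set TE : Finset (Fin (2*k+(k+1))) :=
    Finset.univ.filter (fun x => 2*k < (x : ℕ) ∧ k ≤ (π x : ℕ)) with hTEdef
  have hWTE : a + TE.card = k + 1 := by
    have hdisj : Disjoint W TE := by
      rw [Finset.disjoint_left]
      intro x h1 h2
      rw [hWmem] at h1
      simp only [hTEdef, Finset.mem_filter, Finset.mem_univ, true_and] at h2
      omega
    have hunion : W ∪ TE =
        Finset.univ.filter fun x : Fin (2*k+(k+1)) => k ≤ (x : ℕ) ∧ k ≤ (π x : ℕ) := by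
      ext x
      simp only [Finset.mem_union, hWmem, hTEdef, Finset.mem_filter, Finset.mem_univ, true_and]
      constructor
      · rintro (⟨h1, h2, h3⟩ | ⟨h1, h2⟩)
        · exact ⟨h1, h3⟩
        · exact ⟨by omega, h2⟩
      · rintro ⟨h1, h2⟩
        rcases Nat.lt_or_ge (2*k) (x : ℕ) with h' | h'
        · exact Or.inr ⟨h', h2⟩
        · exact Or.inl ⟨h1, h', h2⟩
    have := Finset.card_union_of_disjoint hdisj
    rw [hunion, extras_card hk hg] at this
    omega
  have hale : a ≤ k + 1 := by omega
  -- B7 : the last positions are extras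
  have B7 : ∀ p : Fin (2*k+(k+1)), 2*k + a ≤ (p : ℕ) → k ≤ (π p : ℕ) := by
    intro p hp
    by_contra hc
    have hplow : (π p : ℕ) < k := not_le.1 hc
    have hsub : TE ⊆ Finset.univ.filter
        fun x : Fin (2*k+(k+1)) => (p : ℕ) < (x : ℕ) := by
      intro x hx
      simp only [hTEdef, Finset.mem_filter, Finset.mem_univ, true_and] at hx
      simp only [Finset.mem_filter, Finset.mem_univ, true_and]
      have := B3 x hx.1 hx.2 p hplow
      rw [Fin.lt_def] at this
      exact this
    have hcard := Finset.card_le_card hsub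
    rw [card_pos_gt] at hcard
    omega
  -- B7b : middle non-window positions are lows
  have B7b : ∀ p : Fin (2*k+(k+1)), k ≤ (p : ℕ) → (p : ℕ) < 2*k + a → p ∉ W →
      (π p : ℕ) < k := by
    intro p h1 h2 hpW
    rcases Nat.lt_or_ge (2*k) (p : ℕ) with h' | h'
    · -- p is in (2k, 2k+a)
      by_contra hc
      have hpv : k ≤ (π p : ℕ) := not_lt.1 hc
      -- then all lows, all of W, and the first k positions are before p
      have hsub : (Finset.univ.filter fun x : Fin (2*k+(k+1)) => (x : ℕ) < k) ∪
          ((Finset.univ.filter fun x : Fin (2*k+(k+1)) => (π x : ℕ) < k) ∪ W) ⊆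
          Finset.univ.filter fun x : Fin (2*k+(k+1)) => (x : ℕ) < (p : ℕ) := by
        intro x hx
        simp only [Finset.mem_union, Finset.mem_filter, Finset.mem_univ, true_and] at hx ⊢
        rcases hx with h'' | h'' | h''
        · omega
        · have := B3 p h' hpv x h''
          rw [Fin.lt_def] at this
          exact this
        · rw [hWmem] at h''
          omega
      have hd1 : Disjoint (Finset.univ.filter fun x : Fin (2*k+(k+1)) => (π x : ℕ) < k) W := by
        rw [Finset.disjoint_left]
        intro x hx1 hx2
        simp only [Finset.mem_filter, Finset.mem_univ, true_and] at hx1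
        rw [hWmem] at hx2
        omega
      have hd2 : Disjoint (Finset.univ.filter fun x : Fin (2*k+(k+1)) => (x : ℕ) < k)
          ((Finset.univ.filter fun x : Fin (2*k+(k+1)) => (π x : ℕ) < k) ∪ W) := by
        rw [Finset.disjoint_left]
        intro x hx1 hx2
        simp only [Finset.mem_filter, Finset.mem_univ, true_and] at hx1
        simp only [Finset.mem_union, Finset.mem_filter, Finset.mem_univ, true_and] at hx2
        rcases hx2 with h'' | h''
        · have := posS_high hk hg x hx1
          omega
        · rw [hWmem] at h''
          omega
      have hcard := Finset.card_le_card hsub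
      rw [Finset.card_union_of_disjoint hd2, Finset.card_union_of_disjoint hd1,
        card_pos_lt k (by omega), card_val_lt π k (by omega),
        card_pos_lt (p : ℕ) p.isLt.le] at hcard
      omega
    · -- p in the window but not in W
      by_contra hc
      exact hpW ((hWmem p).2 ⟨h1, h', not_lt.1 hc⟩)
  -- B8 : values on W are the top a values
  have B8 : ∀ i : Fin (2*k+(k+1)), i ∈ W → 3*k - a < (π i : ℕ) := by
    intro i hiW
    have hcls : ∀ x : Fin (2*k+(k+1)), (π i : ℕ) < (π x : ℕ) → x ∈ W := by
      intro x hx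
      rcases Nat.lt_or_ge (x : ℕ) k with h' | h'
      · exfalso
        have h1 := hmax x h'
        have h2 := B1 i hiW
        omega
      rcases Nat.lt_or_ge (2*k) (x : ℕ) with h'' | h''
      · exfalso
        have hxv : k ≤ (π x : ℕ) := by
          rw [hWmem] at hiW
          omega
        have := B4 x h'' hxv i hiW
        omega
      · refine (hWmem x).2 ⟨h', h'', ?_⟩
        rw [hWmem] at hiW
        omega
    have hsub : (Finset.univ.filter fun x => (π i : ℕ) < (π x : ℕ)) ⊆ W.erase i := by
      intro x hx
      simp only [Finset.mem_filter, Finset.mem_univ, true_and] at hx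
      rw [Finset.mem_erase]
      refine ⟨?_, hcls x hx⟩
      intro he
      rw [he] at hx
      omega
    have hcard := Finset.card_le_card hsub
    rw [card_val_gt, Finset.card_erase_of_mem hiW] at hcard
    have := (π i).isLt
    omega
  -- now define the code
  refine ⟨W.image Fin.val, (Finset.univ.filter
      (fun x : Fin (2*k+(k+1)) => 2*k + a ≤ (x : ℕ))).image (fun x => (π x : ℕ)), ?_⟩
  have hPcard : (W.image Fin.val).card = a := by
    rw [Finset.card_image_of_injective _ Fin.val_injective]
  have hPmem : ∀ m : ℕ, m ∈ W.image Fin.val ↔ ∃ x ∈ W, (x : ℕ) = m := by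
    intro m; simp [Finset.mem_image]
  have hCmem : ∀ m : ℕ, m ∈ (Finset.univ.filter
      (fun x : Fin (2*k+(k+1)) => 2*k + a ≤ (x : ℕ))).image (fun x => (π x : ℕ)) ↔
      ∃ x : Fin (2*k+(k+1)), 2*k + a ≤ (x : ℕ) ∧ (π x : ℕ) = m := by
    intro m
    simp only [Finset.mem_image, Finset.mem_filter, Finset.mem_univ, true_and]
  have hCcard : ((Finset.univ.filter
      (fun x : Fin (2*k+(k+1)) => 2*k + a ≤ (x : ℕ))).image (fun x => (π x : ℕ))).card
      = k + 1 - a := by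
    have hinj : Set.InjOn (fun x : Fin (2*k+(k+1)) => (π x : ℕ))
        ↑(Finset.univ.filter (fun x : Fin (2*k+(k+1)) => 2*k + a ≤ (x : ℕ))) :=
      fun x _ y _ hxy => π.injective (Fin.ext hxy)
    rw [Finset.card_image_of_injOn hinj, card_pos_ge (2*k+a) (by omega)]
    omega
  constructor
  · -- P ⊆ Icc k 2k
    intro m hm
    rw [hPmem] at hm
    obtain ⟨x, hx, rfl⟩ := hm
    rw [hWmem] at hx
    rw [Finset.mem_Icc]
    omega
  refine ⟨?_, ?_, ?_, ?_, ?_, ?_, ?_, ?_, ?_, ?_⟩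
  · -- C ⊆ Icc k 2k
    intro m hm
    rw [hCmem] at hm
    obtain ⟨x, hx, rfl⟩ := hm
    rw [Finset.mem_Icc]
    have h1 := B7 x hx
    have h2 := late_low hk hg x (by omega)
    omega
  · -- cards
    rw [hPcard, hCcard]
    omega
  · -- img1
    intro i hi
    rw [hPcard]
    refine ⟨posS_high hk hg i hi, ?_, ?_⟩
    · -- π i ≤ 3k - a : otherwise π i would be a W value
      by_contra hc
      have h1 : 3*k - a < (π i : ℕ) := not_le.1 hc
      -- W values are exactly (3k-a, 3k]
      have hWvals : W.image (fun x => (π x : ℕ)) =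
          Finset.Icc (3*k - a + 1) (3*k) := by
        apply Finset.eq_of_subset_of_card_le
        · intro m hm
          simp only [Finset.mem_image] at hm
          obtain ⟨x, hx, rfl⟩ := hm
          rw [Finset.mem_Icc]
          have h2 := B8 x hx
          have := (π x).isLt
          omega
        · rw [Finset.card_image_of_injOn (fun x _ y _ hxy => π.injective (Fin.ext hxy)),
            Nat.card_Icc]
          omega
      have : (π i : ℕ) ∈ Finset.Icc (3*k - a + 1) (3*k) := by
        rw [Finset.mem_Icc]
        have := (π i).isLt
        omega
      rw [← hWvals] at this
      simp only [Finset.mem_image] at this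
      obtain ⟨x, hx, hxe⟩ := this
      have : x = i := π.injective (Fin.ext hxe)
      rw [this, hWmem] at hx
      omega
    · -- π i ∉ C
      intro hc
      rw [hCmem] at hc
      obtain ⟨x, hx1, hx2⟩ := hc
      have : x = i := π.injective (Fin.ext hx2)
      rw [this] at hx1
      omega
  · -- img2
    intro i hi
    rw [hPcard]
    rw [hPmem] at hi
    obtain ⟨x, hx, hxe⟩ := hi
    have : x = i := Fin.ext hxe
    rw [this] at hx
    exact B8 i hx
  · -- img3
    intro i h1 h2 h3
    rw [hPcard] at h2
    apply B7b i h1 h2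
    intro hc
    exact h3 ((hPmem (i : ℕ)).2 ⟨i, hc, rfl⟩)
  · -- img4
    intro i hi
    rw [hPcard] at hi
    rw [hCmem]
    exact ⟨i, hi, rfl⟩
  · -- mono1
    intro i j hij hj
    exact first_mono hk hd hg hij hj
  · -- mono2
    intro i j hij hi hj
    rw [hPmem] at hi hj
    obtain ⟨x, hx, hxe⟩ := hi
    obtain ⟨y, hy, hye⟩ := hj
    have hxi : x = i := Fin.ext hxe
    have hyj : y = j := Fin.ext hye
    rw [hxi] at hx
    rw [hyj] at hy
    exact B5 i j hij hx hy
  · -- mono3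
    intro i j hij h1 h2
    exact lows_mono hk hd hg hij h1 h2
  · -- mono4
    intro i j hij hi
    rw [hPcard] at hi
    exact tail_mono hk hd hg hij (by omega)

end CompleteB

section CompleteAll

variable {k : ℕ} {π : Equiv.Perm (Fin (2*k+(k+1)))}

lemma completeness (hk : 0 < k) (hd : ¬ HasDecSeq π 3) (hg : KGood k π) :
    ∃ P C : Finset ℕ, Stairs k P C π := by
  by_cases hA : (π ⟨k-1, by omega⟩ : ℕ) = 3*k
  · exact ⟨∅, Finset.Icc k (2*k), completeness_A hk hd hg hA⟩
  · exact completeness_B hk hd hg hA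

end CompleteAll

section Soundness

variable {k : ℕ} {π : Equiv.Perm (Fin (2*k+(k+1)))}

lemma stairs_S_high (hk : 0 < k) {P C : Finset ℕ} (hst : Stairs k P C π) :
    ∀ i : Fin (2*k+(k+1)), P.card ≤ (i : ℕ) → (i : ℕ) < k → 2*k < (π i : ℕ) := by
  obtain ⟨hP, hC, hcard, img1, img2, img3, img4, mono1, mono2, mono3, mono4⟩ := hst
  intro i hai hik
  by_contra hc
  have hle : (π i : ℕ) ≤ 2*k := not_lt.1 hc
  -- the positions up to i all have values in Icc k 2k \ C
  have hsub1 : (Finset.univ.filter fun x : Fin (2*k+(k+1)) => (x : ℕ) < (i : ℕ) + 1) ⊆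
      Finset.univ.filter fun x : Fin (2*k+(k+1)) =>
        (x : ℕ) < k ∧ (π x : ℕ) ≤ 2*k := by
    intro x hx
    simp only [Finset.mem_filter, Finset.mem_univ, true_and] at hx ⊢
    have hxk : (x : ℕ) < k := by omega
    refine ⟨hxk, ?_⟩
    rcases Nat.lt_or_ge (x : ℕ) (i : ℕ) with h' | h'
    · have := mono1 x i (by rw [Fin.lt_def]; omega) hik
      rw [Fin.lt_def] at this
      omega
    · have : x = i := Fin.ext (by omega)
      rw [this]
      exact hle
  have hcard1 : (i : ℕ) + 1 ≤ (Finset.univ.filter fun x : Fin (2*k+(k+1)) =>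
      (x : ℕ) < k ∧ (π x : ℕ) ≤ 2*k).card := by
    have := Finset.card_le_card hsub1
    rw [card_pos_lt ((i : ℕ) + 1) (by omega)] at this
    exact this
  -- but such values inject into Icc k 2k \ C which has card P.card
  have hcard2 : (Finset.univ.filter fun x : Fin (2*k+(k+1)) =>
      (x : ℕ) < k ∧ (π x : ℕ) ≤ 2*k).card ≤ ((Finset.Icc k (2*k)) \ C).card := by
    apply Finset.card_le_card_of_injOn (fun x => (π x : ℕ))
    · intro x hx
      simp only [Finset.coe_filter, Set.mem_setOf_eq, Finset.mem_filter, Finset.mem_univ, true_and] at hx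
      obtain ⟨h1, h2, h3⟩ := img1 x hx.1
      rw [Finset.mem_coe, Finset.mem_sdiff, Finset.mem_Icc]
      exact ⟨⟨h1, hx.2⟩, h3⟩
    · intro x _ y _ hxy
      exact π.injective (Fin.ext hxy)
  have hcard3 : ((Finset.Icc k (2*k)) \ C).card = P.card := by
    rw [Finset.card_sdiff_of_subset hC, Nat.card_Icc]
    omega
  omega

lemma stairs_tail_mono (hk : 0 < k) {P C : Finset ℕ} (hst : Stairs k P C π) :
    ∀ i j : Fin (2*k+(k+1)), i < j → 2*k + 1 ≤ (i : ℕ) → π i < π j := by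
  obtain ⟨hP, hC, hcard, img1, img2, img3, img4, mono1, mono2, mono3, mono4⟩ := hst
  intro i j hij hi
  have hiP : ∀ x : Fin (2*k+(k+1)), 2*k+1 ≤ (x : ℕ) → (x : ℕ) ∉ P := by
    intro x hx hmem
    have := Finset.mem_Icc.1 (hP hmem)
    omega
  have hCk : ∀ m ∈ C, k ≤ m := fun m hm => (Finset.mem_Icc.1 (hC hm)).1
  rcases Nat.lt_or_ge (i : ℕ) (2*k + P.card) with h' | h'
  · -- i is a low point
    have hilow : (π i : ℕ) < k := img3 i (by omega) h' (hiP i hi)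
    rcases Nat.lt_or_ge (j : ℕ) (2*k + P.card) with h'' | h''
    · have hjlow : (π j : ℕ) < k := img3 j (by rw [Fin.lt_def] at hij; omega) h''
        (hiP j (by rw [Fin.lt_def] at hij; omega))
      exact mono3 i j hij hilow hjlow
    · have := img4 j h''
      have := hCk _ this
      rw [Fin.lt_def]
      omega
  · exact mono4 i j hij h'

lemma stairs_no321 (hk : 0 < k) {P C : Finset ℕ} (hst : Stairs k P C π) :
    ¬ HasDecSeq π 3 := by
  obtain ⟨hP, hC, hcard, img1, img2, img3, img4, mono1, mono2, mono3, mono4⟩ := hst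
  have hCk : ∀ m ∈ C, k ≤ m := fun m hm => (Finset.mem_Icc.1 (hC hm)).1
  have hPk : ∀ m ∈ P, k ≤ m ∧ m ≤ 2*k := fun m hm => Finset.mem_Icc.1 (hP hm)
  -- increasing on the upper class
  have hup : ∀ x y : Fin (2*k+(k+1)), x < y →
      ((x : ℕ) < k ∨ (x : ℕ) ∈ P) → ((y : ℕ) < k ∨ (y : ℕ) ∈ P) → π x < π y := by
    intro x y hxy hx hy
    rcases hx with hx | hx
    · rcases hy with hy | hy
      · exact mono1 x y hxy hy
      · obtain ⟨h1, h2, h3⟩ := img1 x hx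
        have h4 := img2 y hy
        rw [Fin.lt_def]
        omega
    · rcases hy with hy | hy
      · exfalso
        have := (hPk _ hx).1
        rw [Fin.lt_def] at hxy
        omega
      · exact mono2 x y hxy hx hy
  -- increasing on the lower class
  have hdown : ∀ x y : Fin (2*k+(k+1)), x < y →
      ¬((x : ℕ) < k ∨ (x : ℕ) ∈ P) → ¬((y : ℕ) < k ∨ (y : ℕ) ∈ P) → π x < π y := by
    intro x y hxy hx hy
    push_neg at hx hy
    obtain ⟨hx1, hx2⟩ := hx
    obtain ⟨hy1, hy2⟩ := hy
    rcases Nat.lt_or_ge (x : ℕ) (2*k + P.card) with h' | h'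
    · have hxlow : (π x : ℕ) < k := img3 x (by omega) h' hx2
      rcases Nat.lt_or_ge (y : ℕ) (2*k + P.card) with h'' | h''
      · exact mono3 x y hxy hxlow (img3 y (by omega) h'' hy2)
      · have := hCk _ (img4 y h'')
        rw [Fin.lt_def]
        omega
    · exact mono4 x y hxy h'
  rintro ⟨q, hq, hanti⟩
  have h01 : q (0 : Fin 3) < q (1 : Fin 3) := hq (show (0 : Fin 3) < 1 by decide)
  have h12 : q (1 : Fin 3) < q (2 : Fin 3) := hq (show (1 : Fin 3) < 2 by decide)
  have h02 : q (0 : Fin 3) < q (2 : Fin 3) := hq (show (0 : Fin 3) < 2 by decide)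
  have a01 : π (q (1 : Fin 3)) < π (q (0 : Fin 3)) := hanti (show (0 : Fin 3) < 1 by decide)
  have a12 : π (q (2 : Fin 3)) < π (q (1 : Fin 3)) := hanti (show (1 : Fin 3) < 2 by decide)
  have a02 : π (q (2 : Fin 3)) < π (q (0 : Fin 3)) := hanti (show (0 : Fin 3) < 2 by decide)
  set x0 := q (0 : Fin 3)
  set x1 := q (1 : Fin 3)
  set x2 := q (2 : Fin 3)
  by_cases u0 : (x0 : ℕ) < k ∨ (x0 : ℕ) ∈ P <;>
    by_cases u1 : (x1 : ℕ) < k ∨ (x1 : ℕ) ∈ P <;>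
      by_cases u2 : (x2 : ℕ) < k ∨ (x2 : ℕ) ∈ P
  · exact absurd (hup x0 x1 h01 u0 u1) (not_lt.2 a01.le)
  · exact absurd (hup x0 x1 h01 u0 u1) (not_lt.2 a01.le)
  · exact absurd (hup x0 x2 h02 u0 u2) (not_lt.2 a02.le)
  · exact absurd (hdown x1 x2 h12 u1 u2) (not_lt.2 a12.le)
  · exact absurd (hup x1 x2 h12 u1 u2) (not_lt.2 a12.le)
  · exact absurd (hdown x0 x2 h02 u0 u2) (not_lt.2 a02.le)
  · exact absurd (hdown x0 x1 h01 u0 u1) (not_lt.2 a01.le)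
  · exact absurd (hdown x0 x1 h01 u0 u1) (not_lt.2 a01.le)

end Soundness

section SoundnessGood

variable {k : ℕ} {π : Equiv.Perm (Fin (2*k+(k+1)))}

lemma stairs_kgood (hk : 0 < k) {P C : Finset ℕ} (hst : Stairs k P C π) :
    KGood k π := by
  classical
  have hSh := stairs_S_high hk hst
  have htm := stairs_tail_mono hk hst
  obtain ⟨hP, hC, hcard, img1, img2, img3, img4, mono1, mono2, mono3, mono4⟩ := hst
  set a := P.card with hadef
  have hPk : ∀ m ∈ P, k ≤ m ∧ m ≤ 2*k := fun m hm => Finset.mem_Icc.1 (hP hm)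
  have hCk : ∀ m ∈ C, k ≤ m ∧ m ≤ 2*k := fun m hm => Finset.mem_Icc.1 (hC hm)
  have hale : a ≤ k + 1 := by omega
  -- the set of low positions
  have hLcard : (Finset.univ.filter (fun x : Fin (2*k+(k+1)) => (π x : ℕ) < k)).card = k :=
    card_val_lt π k (by omega)
  set vL := Finset.orderEmbOfFin _ hLcard with hvLdef
  have hvLlow : ∀ j, (π (vL j) : ℕ) < k := by
    intro j
    have := Finset.orderEmbOfFin_mem _ hLcard j
    simp only [Finset.mem_filter, Finset.mem_univ, true_and] at this
    exact this
  have hvLpos : ∀ j, ((vL j : Fin (2*k+(k+1))) : ℕ) ≥ k := by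
    intro j
    by_contra hc
    have := (img1 (vL j) (not_le.1 hc)).1
    have := hvLlow j
    omega
  -- first witness pair
  set u1 : Fin k → Fin (2*k+(k+1)) := fun m => ⟨(m : ℕ), by omega⟩ with hu1def
  have hu1val : ∀ m : Fin k, ((u1 m : Fin (2*k+(k+1))) : ℕ) = (m : ℕ) := by
    intro m; rw [hu1def]
  have hu1mono : StrictMono u1 := by
    intro x y hxy
    rw [Fin.lt_def, hu1val, hu1val]
    exact hxy
  have hπu1 : StrictMono (fun m => π (u1 m)) := by
    intro x y hxy
    refine mono1 (u1 x) (u1 y) (hu1mono hxy) ?_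
    rw [hu1val]
    exact y.isLt
  have hπvL : StrictMono (fun j => π (vL j)) := by
    intro x y hxy
    exact mono3 (vL x) (vL y) (vL.strictMono hxy) (hvLlow x) (hvLlow y)
  have hu1vL : ∀ i j, u1 i < vL j := by
    intro i j
    rw [Fin.lt_def, hu1val]
    have h1 := hvLpos j
    have h2 : (i : ℕ) < k := i.isLt
    omega
  have hπvLu1 : ∀ i j, π (vL j) < π (u1 i) := by
    intro i j
    rw [Fin.lt_def]
    have h1 := hvLlow j
    have h2 := (img1 (u1 i) (by rw [hu1val]; exact i.isLt)).1
    omega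
  have cov1 : ∀ p : Fin (2*k+(k+1)), (p : ℕ) < k ∨ (π p : ℕ) < k →
      ∃ u v : Fin k → Fin (2*k+(k+1)),
      StrictMono u ∧ StrictMono v ∧
      (StrictMono fun i => π (u i)) ∧ (StrictMono fun i => π (v i)) ∧
      (∀ i j, u i < v j) ∧ (∀ i j, π (v j) < π (u i)) ∧
      ((∃ i, u i = p) ∨ (∃ j, v j = p)) := by
    intro p hp
    refine ⟨u1, vL, hu1mono, vL.strictMono, hπu1, hπvL, hu1vL, hπvLu1, ?_⟩
    rcases hp with hp | hp
    · refine Or.inl ⟨⟨(p : ℕ), hp⟩, ?_⟩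
      rw [hu1def]
    · right
      have hpL : p ∈ Finset.univ.filter (fun x : Fin (2*k+(k+1)) => (π x : ℕ) < k) := by
        simp only [Finset.mem_filter, Finset.mem_univ, true_and]; exact hp
      have : p ∈ Set.range vL := by rw [hvLdef, Finset.range_orderEmbOfFin]; exact_mod_cast hpL
      obtain ⟨j, hj⟩ := this
      exact ⟨j, hj⟩
  -- the window positions carrying top values
  have hQ2card : (Finset.univ.filter (fun x : Fin (2*k+(k+1)) => (x : ℕ) ∈ P)).card = a := by
    rw [filter_val_mem_eq P (fun m hm => by have := hPk m hm; omega), Finset.card_attachFin]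
  set e2 := Finset.orderEmbOfFin _ hQ2card with he2def
  have he2P : ∀ s : Fin a, ((e2 s : Fin (2*k+(k+1))) : ℕ) ∈ P := by
    intro s
    have := Finset.orderEmbOfFin_mem _ hQ2card s
    simp only [Finset.mem_filter, Finset.mem_univ, true_and] at this
    exact this
  -- second witness pair
  set u2 : Fin k → Fin (2*k+(k+1)) := fun m =>
    if h : (m : ℕ) < k - a then ⟨a + (m : ℕ), by omega⟩
    else e2 ⟨(m : ℕ) - (k - a), by have := m.isLt; omega⟩ with hu2def
  have hu2val1 : ∀ m : Fin k, (h : (m : ℕ) < k - a) →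
      ((u2 m : Fin (2*k+(k+1))) : ℕ) = a + (m : ℕ) := by
    intro m h; rw [hu2def]; simp only [dif_pos h]
  have hu2val2 : ∀ m : Fin k, (h : ¬ (m : ℕ) < k - a) →
      u2 m = e2 ⟨(m : ℕ) - (k - a), by have := m.isLt; omega⟩ := by
    intro m h; rw [hu2def]; simp only [dif_neg h]
  have hu2P : ∀ m, ((u2 m : Fin (2*k+(k+1))) : ℕ) < k ∨ ((u2 m : Fin (2*k+(k+1))) : ℕ) ∈ P := by
    intro m
    by_cases h : (m : ℕ) < k - a
    · left; rw [hu2val1 m h]; omega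
    · right; rw [hu2val2 m h]; exact he2P _
  have hu2le : ∀ m, ((u2 m : Fin (2*k+(k+1))) : ℕ) ≤ 2*k := by
    intro m
    rcases hu2P m with h | h
    · omega
    · exact (hPk _ h).2
  have hu2big : ∀ m, 2*k - 1 < (π (u2 m) : ℕ) ∧ (a ≤ k → 2*k < (π (u2 m) : ℕ)) := by
    intro m
    by_cases h : (m : ℕ) < k - a
    · have hv := hu2val1 m h
      have h2 : 2*k < (π (u2 m) : ℕ) := hSh (u2 m) (by omega) (by omega)
      exact ⟨by omega, fun _ => h2⟩
    · rw [hu2val2 m h]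
      have h2 := img2 _ (he2P ⟨(m : ℕ) - (k - a), by have := m.isLt; omega⟩)
      exact ⟨by omega, fun hak => by omega⟩
  have hu2mono : StrictMono u2 := by
    intro x y hxy
    have hxy' : (x : ℕ) < (y : ℕ) := hxy
    by_cases hx : (x : ℕ) < k - a <;> by_cases hy : (y : ℕ) < k - a
    · rw [Fin.lt_def, hu2val1 x hx, hu2val1 y hy]; omega
    · rw [Fin.lt_def, hu2val1 x hx]
      rw [hu2val2 y hy]
      have := (hPk _ (he2P ⟨(y : ℕ) - (k - a), by have := y.isLt; omega⟩)).1
      omega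
    · exfalso; omega
    · rw [hu2val2 x hx, hu2val2 y hy]
      exact e2.strictMono (by rw [Fin.lt_def]; show (x:ℕ) - (k-a) < (y:ℕ) - (k-a); omega)
  have hπu2 : StrictMono (fun m => π (u2 m)) := by
    intro x y hxy
    have hxy' : (x : ℕ) < (y : ℕ) := hxy
    show π (u2 x) < π (u2 y)
    by_cases hx : (x : ℕ) < k - a <;> by_cases hy : (y : ℕ) < k - a
    · exact mono1 _ _ (hu2mono hxy) (by rw [hu2val1 y hy]; omega)
    · have h1 : (π (u2 x) : ℕ) ≤ 3*k - a := by
        have := (img1 (u2 x) (by rw [hu2val1 x hx]; omega)).2.1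
        exact this
      have h2 : 3*k - a < (π (u2 y) : ℕ) := by
        rw [hu2val2 y hy]
        exact img2 _ (he2P _)
      rw [Fin.lt_def]
      omega
    · exfalso; omega
    · rw [hu2val2 x hx, hu2val2 y hy]
      refine mono2 _ _ ?_ (he2P _) (he2P _)
      exact e2.strictMono (by rw [Fin.lt_def]; show (x:ℕ) - (k-a) < (y:ℕ) - (k-a); omega)
  set v2 : Fin k → Fin (2*k+(k+1)) := fun j => ⟨2*k+1+(j : ℕ), by omega⟩ with hv2def
  have hv2val : ∀ j : Fin k, ((v2 j : Fin (2*k+(k+1))) : ℕ) = 2*k+1+(j : ℕ) := by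
    intro j; rw [hv2def]
  have hv2mono : StrictMono v2 := by
    intro x y hxy
    have hxy' : (x : ℕ) < (y : ℕ) := hxy
    rw [Fin.lt_def, hv2val, hv2val]
    omega
  have hπv2 : StrictMono (fun j => π (v2 j)) := by
    intro x y hxy
    exact htm (v2 x) (v2 y) (hv2mono hxy) (by rw [hv2val]; omega)
  have hv2low : ∀ j, (π (v2 j) : ℕ) < k ∨ ((π (v2 j) : ℕ) ≤ 2*k ∧ a ≤ k) := by
    intro j
    rcases Nat.lt_or_ge ((v2 j : Fin (2*k+(k+1))) : ℕ) (2*k + a) with h | h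
    · left
      refine img3 (v2 j) (by rw [hv2val]; omega) h ?_
      intro hmem
      have := (hPk _ hmem).2
      rw [hv2val] at this
      omega
    · right
      have h1 := img4 (v2 j) h
      have h2 := (hCk _ h1).2
      have h3 := hv2val j
      have h4 : (j : ℕ) < k := j.isLt
      exact ⟨h2, by omega⟩
  have hu2v2 : ∀ i j, u2 i < v2 j := by
    intro i j
    rw [Fin.lt_def, hv2val]
    have h1 := hu2le i
    omega
  have hπv2u2 : ∀ i j, π (v2 j) < π (u2 i) := by
    intro i j
    rw [Fin.lt_def]
    obtain ⟨hb1, hb2⟩ := hu2big i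
    rcases hv2low j with h | ⟨h, hak⟩
    · omega
    · have := hb2 hak
      omega
  have cov2 : ∀ p : Fin (2*k+(k+1)), ((p : ℕ) ∈ P ∧ a ≤ k) ∨ 2*k+1 ≤ (p : ℕ) →
      ∃ u v : Fin k → Fin (2*k+(k+1)),
      StrictMono u ∧ StrictMono v ∧
      (StrictMono fun i => π (u i)) ∧ (StrictMono fun i => π (v i)) ∧
      (∀ i j, u i < v j) ∧ (∀ i j, π (v j) < π (u i)) ∧
      ((∃ i, u i = p) ∨ (∃ j, v j = p)) := by
    intro p hp
    refine ⟨u2, v2, hu2mono, hv2mono, hπu2, hπv2, hu2v2, hπv2u2, ?_⟩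
    rcases hp with ⟨hp, hak⟩ | hp
    · left
      have hpQ2 : p ∈ Finset.univ.filter (fun x : Fin (2*k+(k+1)) => (x : ℕ) ∈ P) := by
        simp only [Finset.mem_filter, Finset.mem_univ, true_and]; exact hp
      have : p ∈ Set.range e2 := by rw [he2def, Finset.range_orderEmbOfFin]; exact_mod_cast hpQ2
      obtain ⟨s, hs⟩ := this
      have hsa : (s : ℕ) < a := s.isLt
      refine ⟨⟨k - a + (s : ℕ), by omega⟩, ?_⟩
      have hcond : ¬ ((⟨k - a + (s : ℕ), by omega⟩ : Fin k) : ℕ) < k - a := by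
        show ¬ (k - a + (s : ℕ) < k - a)
        omega
      rw [hu2val2 _ hcond]
      have harg : (⟨((⟨k - a + (s : ℕ), by omega⟩ : Fin k) : ℕ) - (k - a),
          by omega⟩ : Fin a) = s := by
        apply Fin.ext
        show (k - a + (s : ℕ)) - (k - a) = (s : ℕ)
        omega
      rw [harg]
      exact hs
    · right
      refine ⟨⟨(p : ℕ) - (2*k+1), by have := p.isLt; omega⟩, ?_⟩
      apply Fin.ext
      rw [hv2val]
      show 2*k+1+((p : ℕ) - (2*k+1)) = (p : ℕ)
      omega
  -- now the main coverage
  intro p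
  by_cases h1 : (p : ℕ) < k
  · exact cov1 p (Or.inl h1)
  by_cases h2 : (π p : ℕ) < k
  · exact cov1 p (Or.inr h2)
  by_cases h3 : (p : ℕ) ∈ P
  · rcases Nat.lt_or_ge a (k+1) with hak | hak
    · exact cov2 p (Or.inl ⟨h3, by omega⟩)
    · -- a = k + 1
      have hak1 : a = k + 1 := by omega
      have hpQ2 : p ∈ Finset.univ.filter (fun x : Fin (2*k+(k+1)) => (x : ℕ) ∈ P) := by
        simp only [Finset.mem_filter, Finset.mem_univ, true_and]; exact h3
      have : p ∈ Set.range e2 := by rw [he2def, Finset.range_orderEmbOfFin]; exact_mod_cast hpQ2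
      obtain ⟨s, hs⟩ := this
      rcases Nat.lt_or_ge (s : ℕ) k with hsk | hsk
      · refine ⟨u2, v2, hu2mono, hv2mono, hπu2, hπv2, hu2v2, hπv2u2, Or.inl ?_⟩
        refine ⟨⟨k - a + (s : ℕ), by omega⟩, ?_⟩
        have hcond : ¬ ((⟨k - a + (s : ℕ), by omega⟩ : Fin k) : ℕ) < k - a := by
          show ¬ (k - a + (s : ℕ) < k - a)
          omega
        rw [hu2val2 _ hcond]
        have harg : (⟨((⟨k - a + (s : ℕ), by omega⟩ : Fin k) : ℕ) - (k - a),
            by omega⟩ : Fin a) = s := by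
          apply Fin.ext
          show (k - a + (s : ℕ)) - (k - a) = (s : ℕ)
          omega
        rw [harg]
        exact hs
      · -- s = k : use the shifted chain
        have hsk1 : (s : ℕ) = k := by have := s.isLt; omega
        set u3 : Fin k → Fin (2*k+(k+1)) := fun m => e2 ⟨(m : ℕ) + 1, by omega⟩ with hu3def
        have hu3eq : ∀ m : Fin k, u3 m = e2 ⟨(m : ℕ) + 1, by omega⟩ := by
          intro m; rw [hu3def]
        have hu3mono : StrictMono u3 := by
          intro x y hxy
          have hxy' : (x : ℕ) < (y : ℕ) := hxy
          rw [hu3eq, hu3eq]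
          exact e2.strictMono (by rw [Fin.lt_def]; show (x:ℕ)+1 < (y:ℕ)+1; omega)
        have hπu3 : StrictMono (fun m => π (u3 m)) := by
          intro x y hxy
          have hxy' : (x : ℕ) < (y : ℕ) := hxy
          show π (u3 x) < π (u3 y)
          rw [hu3eq, hu3eq]
          refine mono2 _ _ ?_ (he2P _) (he2P _)
          exact e2.strictMono (by rw [Fin.lt_def]; show (x:ℕ)+1 < (y:ℕ)+1; omega)
        have hu3le : ∀ m, ((u3 m : Fin (2*k+(k+1))) : ℕ) ≤ 2*k := by
          intro m
          rw [hu3eq]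
          exact (hPk _ (he2P _)).2
        have hu3v2 : ∀ i j, u3 i < v2 j := by
          intro i j
          rw [Fin.lt_def, hv2val]
          have h1 := hu3le i
          omega
        have hπv2u3 : ∀ i j, π (v2 j) < π (u3 i) := by
          intro i j
          rw [Fin.lt_def, hu3eq]
          have hb := img2 _ (he2P (⟨(i : ℕ) + 1, by omega⟩ : Fin a))
          rcases hv2low j with h | ⟨h, hak'⟩
          · omega
          · omega
        refine ⟨u3, v2, hu3mono, hv2mono, hπu3, hπv2, hu3v2, hπv2u3, Or.inl ?_⟩
        refine ⟨⟨k - 1, by omega⟩, ?_⟩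
        rw [hu3eq]
        have harg : (⟨((⟨k-1, by omega⟩ : Fin k) : ℕ) + 1, by omega⟩ : Fin a) = s := by
          apply Fin.ext
          show (k - 1) + 1 = (s : ℕ)
          omega
        rw [harg]
        exact hs
  · -- p is in the final block
    have h4 : 2*k + a ≤ (p : ℕ) := by
      by_contra hc
      exact absurd (img3 p (by omega) (not_le.1 hc) h3) h2
    rcases Nat.lt_or_ge (2*k) (p : ℕ) with h5 | h5
    · exact cov2 p (Or.inr (by omega))
    · -- p = 2k and a = 0
      have hp2k : (p : ℕ) = 2*k := by omega
      have ha0 : a = 0 := by omega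
      set v0 : Fin k → Fin (2*k+(k+1)) := fun j => ⟨2*k+(j : ℕ), by omega⟩ with hv0def
      have hv0val : ∀ j : Fin k, ((v0 j : Fin (2*k+(k+1))) : ℕ) = 2*k+(j : ℕ) := by
        intro j; rw [hv0def]
      have hv0mono : StrictMono v0 := by
        intro x y hxy
        have hxy' : (x : ℕ) < (y : ℕ) := hxy
        rw [Fin.lt_def, hv0val, hv0val]
        omega
      have hπv0 : StrictMono (fun j => π (v0 j)) := by
        intro x y hxy
        exact mono4 (v0 x) (v0 y) (hv0mono hxy) (by rw [hv0val]; omega)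
      have hu1v0 : ∀ i j, u1 i < v0 j := by
        intro i j
        rw [Fin.lt_def, hu1val, hv0val]
        have : (i : ℕ) < k := i.isLt
        omega
      have hπv0u1 : ∀ i j, π (v0 j) < π (u1 i) := by
        intro i j
        rw [Fin.lt_def]
        have hb := hSh (u1 i) (by rw [hu1val]; omega) (by rw [hu1val]; exact i.isLt)
        have hx1 := img4 (v0 j) (by rw [hv0val]; omega)
        have hx2 := (hCk _ hx1).2
        omega
      refine ⟨u1, v0, hu1mono, hv0mono, hπu1, hπv0, hu1v0, hπv0u1, Or.inr ?_⟩
      refine ⟨⟨0, by omega⟩, ?_⟩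
      apply Fin.ext
      rw [hv0val]
      show 2*k+((0:ℕ)) = (p : ℕ)
      omega

end SoundnessGood

section Existence

variable {k : ℕ}

lemma existence (hk : 0 < k) (P C : Finset ℕ) (hP : P ⊆ Finset.Icc k (2*k))
    (hC : C ⊆ Finset.Icc k (2*k)) (hcard : P.card + C.card = k+1) :
    ∃ π : Equiv.Perm (Fin (2*k+(k+1))), Stairs k P C π := by
  classical
  set a := P.card with hadef
  have hPk : ∀ m ∈ P, k ≤ m ∧ m ≤ 2*k := fun m hm => Finset.mem_Icc.1 (hP hm)
  have hCk : ∀ m ∈ C, k ≤ m ∧ m ≤ 2*k := fun m hm => Finset.mem_Icc.1 (hC hm)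
  have hale : a ≤ k + 1 := by omega
  have hCa : C.Nonempty → a ≤ k := by
    rintro ⟨m, hm⟩
    have := Finset.card_pos.2 ⟨m, hm⟩
    omega
  have hCsub : C ⊆ Finset.Icc k (3*k - a) := by
    intro m hm
    have h1 := hCk m hm
    have h2 := hCa ⟨m, hm⟩
    rw [Finset.mem_Icc]
    omega
  have hPsub : P ⊆ Finset.Ico k (2*k + a) := by
    intro m hm
    have h1 := hPk m hm
    have h2 : 1 ≤ a := Finset.card_pos.2 ⟨m, hm⟩
    rw [Finset.mem_Ico]
    omega
  -- value sets
  have hbV1 : ∀ m ∈ (Finset.Icc k (3*k - a)) \ C, m < 2*k+(k+1) := by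
    intro m hm
    rw [Finset.mem_sdiff, Finset.mem_Icc] at hm
    omega
  have hbV2 : ∀ m ∈ Finset.Icc (3*k - a + 1) (3*k), m < 2*k+(k+1) := by
    intro m hm
    rw [Finset.mem_Icc] at hm
    omega
  have hbV3 : ∀ m ∈ Finset.range k, m < 2*k+(k+1) := by
    intro m hm
    rw [Finset.mem_range] at hm
    omega
  have hbV4 : ∀ m ∈ C, m < 2*k+(k+1) := by
    intro m hm
    have := hCk m hm
    omega
  set W1 := ((Finset.Icc k (3*k - a)) \ C).attachFin hbV1 with hW1def
  set W2 := (Finset.Icc (3*k - a + 1) (3*k)).attachFin hbV2 with hW2def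
  set W3 := (Finset.range k).attachFin hbV3 with hW3def
  set W4 := C.attachFin hbV4 with hW4def
  have cW1 : W1.card = k := by
    rw [hW1def, Finset.card_attachFin, Finset.card_sdiff_of_subset hCsub, Nat.card_Icc]
    omega
  have cW2 : W2.card = a := by
    rw [hW2def, Finset.card_attachFin, Nat.card_Icc]
    omega
  have cW3 : W3.card = k := by
    rw [hW3def, Finset.card_attachFin, Finset.card_range]
  have cW4 : W4.card = k + 1 - a := by
    rw [hW4def, Finset.card_attachFin]
    omega
  have mW1 : ∀ y ∈ W1, k ≤ (y : ℕ) ∧ (y : ℕ) ≤ 3*k - a ∧ (y : ℕ) ∉ C := by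
    intro y hy
    rw [hW1def, Finset.mem_attachFin, Finset.mem_sdiff, Finset.mem_Icc] at hy
    exact ⟨hy.1.1, hy.1.2, hy.2⟩
  have mW2 : ∀ y ∈ W2, 3*k - a < (y : ℕ) ∧ (y : ℕ) ≤ 3*k := by
    intro y hy
    rw [hW2def, Finset.mem_attachFin, Finset.mem_Icc] at hy
    omega
  have mW3 : ∀ y ∈ W3, (y : ℕ) < k := by
    intro y hy
    rw [hW3def, Finset.mem_attachFin, Finset.mem_range] at hy
    exact hy
  have mW4 : ∀ y ∈ W4, (y : ℕ) ∈ C := by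
    intro y hy
    rw [hW4def, Finset.mem_attachFin] at hy
    exact hy
  -- position classes
  have hQ2card : (Finset.univ.filter (fun x : Fin (2*k+(k+1)) => (x : ℕ) ∈ P)).card = a := by
    rw [filter_val_mem_eq P (fun m hm => by have := hPk m hm; omega), Finset.card_attachFin]
  have hQ3eq : (Finset.univ.filter (fun x : Fin (2*k+(k+1)) =>
      k ≤ (x : ℕ) ∧ (x : ℕ) < 2*k + a ∧ (x : ℕ) ∉ P)) =
      ((Finset.Ico k (2*k+a)) \ P).attachFin (by
        intro m hm
        rw [Finset.mem_sdiff, Finset.mem_Ico] at hm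
        omega) := by
    ext x
    rw [Finset.mem_attachFin, Finset.mem_sdiff, Finset.mem_Ico]
    simp only [Finset.mem_filter, Finset.mem_univ, true_and]
    tauto
  have hQ3card : (Finset.univ.filter (fun x : Fin (2*k+(k+1)) =>
      k ≤ (x : ℕ) ∧ (x : ℕ) < 2*k + a ∧ (x : ℕ) ∉ P)).card = k := by
    rw [hQ3eq, Finset.card_attachFin, Finset.card_sdiff_of_subset hPsub, Nat.card_Ico]
    omega
  have hQ4card : (Finset.univ.filter (fun x : Fin (2*k+(k+1)) =>
      2*k + a ≤ (x : ℕ))).card = k + 1 - a := by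
    rw [card_pos_ge (2*k+a) (by omega)]
    omega
  set g1 := W1.orderEmbOfFin cW1 with hg1def
  set g2 := W2.orderEmbOfFin cW2 with hg2def
  set g3 := W3.orderEmbOfFin cW3 with hg3def
  set g4 := W4.orderEmbOfFin cW4 with hg4def
  set i2 := (Finset.univ.filter (fun x : Fin (2*k+(k+1)) => (x : ℕ) ∈ P)).orderIsoOfFin
    hQ2card with hi2def
  set i3 := (Finset.univ.filter (fun x : Fin (2*k+(k+1)) =>
      k ≤ (x : ℕ) ∧ (x : ℕ) < 2*k + a ∧ (x : ℕ) ∉ P)).orderIsoOfFin hQ3card with hi3def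
  set i4 := (Finset.univ.filter (fun x : Fin (2*k+(k+1)) =>
      2*k + a ≤ (x : ℕ))).orderIsoOfFin hQ4card with hi4def
  have hmem2 : ∀ i : Fin (2*k+(k+1)), (i : ℕ) ∈ P →
      i ∈ Finset.univ.filter (fun x : Fin (2*k+(k+1)) => (x : ℕ) ∈ P) := by
    intro i h
    simp only [Finset.mem_filter, Finset.mem_univ, true_and]
    exact h
  have hmem3 : ∀ i : Fin (2*k+(k+1)), k ≤ (i : ℕ) → (i : ℕ) < 2*k + a → (i : ℕ) ∉ P →
      i ∈ Finset.univ.filter (fun x : Fin (2*k+(k+1)) =>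
        k ≤ (x : ℕ) ∧ (x : ℕ) < 2*k + a ∧ (x : ℕ) ∉ P) := by
    intro i h1 h2 h3
    simp only [Finset.mem_filter, Finset.mem_univ, true_and]
    exact ⟨h1, h2, h3⟩
  have hmem4 : ∀ i : Fin (2*k+(k+1)), 2*k + a ≤ (i : ℕ) →
      i ∈ Finset.univ.filter (fun x : Fin (2*k+(k+1)) => 2*k + a ≤ (x : ℕ)) := by
    intro i h
    simp only [Finset.mem_filter, Finset.mem_univ, true_and]
    exact h
  set f : Fin (2*k+(k+1)) → Fin (2*k+(k+1)) := fun i =>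
    if h1 : (i : ℕ) < k then g1 ⟨(i : ℕ), h1⟩
    else if h2 : (i : ℕ) ∈ P then g2 (i2.symm ⟨i, hmem2 i h2⟩)
    else if h3 : (i : ℕ) < 2*k + a then g3 (i3.symm ⟨i, hmem3 i (not_lt.1 h1) h3 h2⟩)
    else g4 (i4.symm ⟨i, hmem4 i (not_lt.1 h3)⟩) with hfdef
  have hf1 : ∀ i : Fin (2*k+(k+1)), ∀ h1 : (i : ℕ) < k, f i = g1 ⟨(i : ℕ), h1⟩ := by
    intro i h1
    simp only [hfdef]
    rw [dif_pos h1]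
  have hf2 : ∀ i : Fin (2*k+(k+1)), (h2 : (i : ℕ) ∈ P) →
      f i = g2 (i2.symm ⟨i, hmem2 i h2⟩) := by
    intro i h2
    have h1 : ¬ (i : ℕ) < k := not_lt.2 (hPk _ h2).1
    simp only [hfdef]
    rw [dif_neg h1, dif_pos h2]
  have hf3 : ∀ i : Fin (2*k+(k+1)), (h : k ≤ (i : ℕ) ∧ (i : ℕ) < 2*k + a ∧ (i : ℕ) ∉ P) →
      f i = g3 (i3.symm ⟨i, hmem3 i h.1 h.2.1 h.2.2⟩) := by
    intro i h
    simp only [hfdef]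
    rw [dif_neg (not_lt.2 h.1), dif_neg h.2.2, dif_pos h.2.1]
  have hf4 : ∀ i : Fin (2*k+(k+1)), (h : 2*k + a ≤ (i : ℕ)) →
      f i = g4 (i4.symm ⟨i, hmem4 i h⟩) := by
    intro i h
    have h1 : ¬ (i : ℕ) < k := by omega
    have h2 : (i : ℕ) ∉ P := by
      intro hm
      have := hPsub hm
      rw [Finset.mem_Ico] at this
      omega
    have h3 : ¬ (i : ℕ) < 2*k + a := not_lt.2 h
    simp only [hfdef]
    rw [dif_neg h1, dif_neg h2, dif_neg h3]
  -- membership of values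
  have hfm1 : ∀ i : Fin (2*k+(k+1)), (i : ℕ) < k → f i ∈ W1 := by
    intro i h
    rw [hf1 i h]
    exact Finset.orderEmbOfFin_mem _ _ _
  have hfm2 : ∀ i : Fin (2*k+(k+1)), (i : ℕ) ∈ P → f i ∈ W2 := by
    intro i h
    rw [hf2 i h]
    exact Finset.orderEmbOfFin_mem _ _ _
  have hfm3 : ∀ i : Fin (2*k+(k+1)), (k ≤ (i : ℕ) ∧ (i : ℕ) < 2*k + a ∧ (i : ℕ) ∉ P) →
      f i ∈ W3 := by
    intro i h
    rw [hf3 i h]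
    exact Finset.orderEmbOfFin_mem _ _ _
  have hfm4 : ∀ i : Fin (2*k+(k+1)), 2*k + a ≤ (i : ℕ) → f i ∈ W4 := by
    intro i h
    rw [hf4 i h]
    exact Finset.orderEmbOfFin_mem _ _ _
  -- pairwise disjointness of value classes
  have hd12 : ∀ z : Fin (2*k+(k+1)), z ∈ W1 → z ∈ W2 → False := by
    intro z p1 p2
    have := mW1 z p1
    have := mW2 z p2
    omega
  have hd13 : ∀ z : Fin (2*k+(k+1)), z ∈ W1 → z ∈ W3 → False := by
    intro z p1 p2
    have := mW1 z p1
    have := mW3 z p2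
    omega
  have hd14 : ∀ z : Fin (2*k+(k+1)), z ∈ W1 → z ∈ W4 → False := by
    intro z p1 p2
    exact (mW1 z p1).2.2 (mW4 z p2)
  have hd23 : ∀ z : Fin (2*k+(k+1)), z ∈ W2 → z ∈ W3 → False := by
    intro z p1 p2
    have h1 := mW2 z p1
    have h2 := mW3 z p2
    omega
  have hd24 : ∀ z : Fin (2*k+(k+1)), z ∈ W2 → z ∈ W4 → False := by
    intro z p1 p2
    have h1 := mW2 z p1
    have h2 := mW4 z p2
    have h3 := hCk _ h2
    have h4 := hCa ⟨_, h2⟩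
    omega
  have hd34 : ∀ z : Fin (2*k+(k+1)), z ∈ W3 → z ∈ W4 → False := by
    intro z p1 p2
    have h1 := mW3 z p1
    have h2 := hCk _ (mW4 z p2)
    omega
  -- class trichotomy for positions
  have hclass : ∀ i : Fin (2*k+(k+1)), ((i : ℕ) < k) ∨ ((i : ℕ) ∈ P) ∨
      (k ≤ (i : ℕ) ∧ (i : ℕ) < 2*k + a ∧ (i : ℕ) ∉ P) ∨ (2*k + a ≤ (i : ℕ)) := by
    intro i
    by_cases h1 : (i : ℕ) < k
    · exact Or.inl h1
    by_cases h2 : (i : ℕ) ∈ P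
    · exact Or.inr (Or.inl h2)
    by_cases h3 : (i : ℕ) < 2*k + a
    · exact Or.inr (Or.inr (Or.inl ⟨not_lt.1 h1, h3, h2⟩))
    · exact Or.inr (Or.inr (Or.inr (not_lt.1 h3)))
  -- injectivity
  have hinj : Function.Injective f := by
    intro x y hxy
    rcases hclass x with hx | hx | hx | hx <;> rcases hclass y with hy | hy | hy | hy
    · rw [hf1 x hx, hf1 y hy] at hxy
      have := (W1.orderEmbOfFin cW1).injective hxy
      rw [Fin.mk.injEq] at this
      exact Fin.ext this
    · exact absurd (hxy ▸ hfm1 x hx) (fun h => hd12 _ h (hfm2 y hy))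
    · exact absurd (hxy ▸ hfm1 x hx) (fun h => hd13 _ h (hfm3 y hy))
    · exact absurd (hxy ▸ hfm1 x hx) (fun h => hd14 _ h (hfm4 y hy))
    · exact absurd (hxy ▸ hfm2 x hx) (fun h => hd12 _ (hfm1 y hy) h)
    · rw [hf2 x hx, hf2 y hy] at hxy
      have h1 := (W2.orderEmbOfFin cW2).injective hxy
      have h2 := i2.symm.injective h1
      rw [Subtype.mk.injEq] at h2
      exact h2
    · exact absurd (hxy ▸ hfm2 x hx) (fun h => hd23 _ h (hfm3 y hy))
    · exact absurd (hxy ▸ hfm2 x hx) (fun h => hd24 _ h (hfm4 y hy))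
    · exact absurd (hxy ▸ hfm3 x hx) (fun h => hd13 _ (hfm1 y hy) h)
    · exact absurd (hxy ▸ hfm3 x hx) (fun h => hd23 _ (hfm2 y hy) h)
    · rw [hf3 x hx, hf3 y hy] at hxy
      have h1 := (W3.orderEmbOfFin cW3).injective hxy
      have h2 := i3.symm.injective h1
      rw [Subtype.mk.injEq] at h2
      exact h2
    · exact absurd (hxy ▸ hfm3 x hx) (fun h => hd34 _ h (hfm4 y hy))
    · exact absurd (hxy ▸ hfm4 x hx) (fun h => hd14 _ (hfm1 y hy) h)
    · exact absurd (hxy ▸ hfm4 x hx) (fun h => hd24 _ (hfm2 y hy) h)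
    · exact absurd (hxy ▸ hfm4 x hx) (fun h => hd34 _ (hfm3 y hy) h)
    · rw [hf4 x hx, hf4 y hy] at hxy
      have h1 := (W4.orderEmbOfFin cW4).injective hxy
      have h2 := i4.symm.injective h1
      rw [Subtype.mk.injEq] at h2
      exact h2
  have hbij : Function.Bijective f := Finite.injective_iff_bijective.1 hinj
  refine ⟨Equiv.ofBijective f hbij, ?_, ?_, ?_, ?_, ?_, ?_, ?_, ?_, ?_, ?_, ?_⟩
  · exact hP
  · exact hC
  · exact hcard
  · intro i hi
    have := mW1 _ (hfm1 i hi)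
    exact ⟨this.1, this.2.1, this.2.2⟩
  · intro i hi
    exact (mW2 _ (hfm2 i hi)).1
  · intro i h1 h2 h3
    exact mW3 _ (hfm3 i ⟨h1, h2, h3⟩)
  · intro i hi
    exact mW4 _ (hfm4 i hi)
  · -- mono1
    intro i j hij hj
    show f i < f j
    have hi : (i : ℕ) < k := lt_trans hij hj
    rw [hf1 i hi, hf1 j hj]
    exact (W1.orderEmbOfFin cW1).strictMono (by rw [Fin.lt_def]; exact hij)
  · -- mono2
    intro i j hij hi hj
    show f i < f j
    rw [hf2 i hi, hf2 j hj]
    apply (W2.orderEmbOfFin cW2).strictMono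
    apply i2.symm.strictMono
    exact Subtype.mk_lt_mk.2 hij
  · -- mono3
    intro i j hij hvi hvj
    show f i < f j
    have hvi' : (f i : ℕ) < k := hvi
    have hvj' : (f j : ℕ) < k := hvj
    clear hvi hvj
    have hci : k ≤ (i : ℕ) ∧ (i : ℕ) < 2*k + a ∧ (i : ℕ) ∉ P := by
      rcases hclass i with h | h | h | h
      · exact absurd (mW1 _ (hfm1 i h)).1 (by change ¬ _; omega)
      · have := (mW2 _ (hfm2 i h)).1
        exfalso
        omega
      · exact h
      · have := hCk _ (mW4 _ (hfm4 i h))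
        exfalso
        omega
    have hcj : k ≤ (j : ℕ) ∧ (j : ℕ) < 2*k + a ∧ (j : ℕ) ∉ P := by
      rcases hclass j with h | h | h | h
      · exact absurd (mW1 _ (hfm1 j h)).1 (by change ¬ _; omega)
      · have := (mW2 _ (hfm2 j h)).1
        exfalso
        omega
      · exact h
      · have := hCk _ (mW4 _ (hfm4 j h))
        exfalso
        omega
    rw [hf3 i hci, hf3 j hcj]
    apply (W3.orderEmbOfFin cW3).strictMono
    apply i3.symm.strictMono
    exact Subtype.mk_lt_mk.2 hij
  · -- mono4
    intro i j hij hi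
    show f i < f j
    have hj : 2*k + a ≤ (j : ℕ) := by
      have : (i : ℕ) < (j : ℕ) := hij
      omega
    rw [hf4 i hi, hf4 j hj]
    apply (W4.orderEmbOfFin cW4).strictMono
    apply i4.symm.strictMono
    exact Subtype.mk_lt_mk.2 hij

end Existence

section Uniqueness

variable {k : ℕ} {π ρ : Equiv.Perm (Fin (2*k+(k+1)))}

lemma stairs_unique (hk : 0 < k) {P C : Finset ℕ}
    (h1 : Stairs k P C π) (h2 : Stairs k P C ρ) : π = ρ := by
  classical
  obtain ⟨hP, hC, hcard, img1, img2, img3, img4, mono1, mono2, mono3, mono4⟩ := h1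
  obtain ⟨-, -, -, img1', img2', img3', img4', mono1', mono2', mono3', mono4'⟩ := h2
  set a := P.card with hadef
  have hPk : ∀ m ∈ P, k ≤ m ∧ m ≤ 2*k := fun m hm => Finset.mem_Icc.1 (hP hm)
  have hCk : ∀ m ∈ C, k ≤ m ∧ m ≤ 2*k := fun m hm => Finset.mem_Icc.1 (hC hm)
  have hale : a ≤ k + 1 := by omega
  have hCa : C.Nonempty → a ≤ k := by
    rintro ⟨m, hm⟩
    have := Finset.card_pos.2 ⟨m, hm⟩
    omega
  have hCsub : C ⊆ Finset.Icc k (3*k - a) := by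
    intro m hm
    have h1 := hCk m hm
    have h2 := hCa ⟨m, hm⟩
    rw [Finset.mem_Icc]
    omega
  have hPsub : P ⊆ Finset.Ico k (2*k + a) := by
    intro m hm
    have h1 := hPk m hm
    have h2 : 1 ≤ a := Finset.card_pos.2 ⟨m, hm⟩
    rw [Finset.mem_Ico]
    omega
  have hbV1 : ∀ m ∈ (Finset.Icc k (3*k - a)) \ C, m < 2*k+(k+1) := by
    intro m hm
    rw [Finset.mem_sdiff, Finset.mem_Icc] at hm
    omega
  have hbV2 : ∀ m ∈ Finset.Icc (3*k - a + 1) (3*k), m < 2*k+(k+1) := by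
    intro m hm
    rw [Finset.mem_Icc] at hm
    omega
  have hbV3 : ∀ m ∈ Finset.range k, m < 2*k+(k+1) := by
    intro m hm
    rw [Finset.mem_range] at hm
    omega
  have hbV4 : ∀ m ∈ C, m < 2*k+(k+1) := by
    intro m hm
    have := hCk m hm
    omega
  have cW1 : (((Finset.Icc k (3*k - a)) \ C).attachFin hbV1).card = k := by
    rw [Finset.card_attachFin, Finset.card_sdiff_of_subset hCsub, Nat.card_Icc]
    omega
  have cW2 : ((Finset.Icc (3*k - a + 1) (3*k)).attachFin hbV2).card = a := by
    rw [Finset.card_attachFin, Nat.card_Icc]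
    omega
  have cW3 : ((Finset.range k).attachFin hbV3).card = k := by
    rw [Finset.card_attachFin, Finset.card_range]
  have cW4 : (C.attachFin hbV4).card = k + 1 - a := by
    rw [Finset.card_attachFin]
    omega
  have hQ1card : (Finset.univ.filter (fun x : Fin (2*k+(k+1)) => (x : ℕ) < k)).card = k :=
    card_pos_lt k (by omega)
  have hQ2card : (Finset.univ.filter (fun x : Fin (2*k+(k+1)) => (x : ℕ) ∈ P)).card = a := by
    rw [filter_val_mem_eq P (fun m hm => by have := hPk m hm; omega), Finset.card_attachFin]
  have hQ3eq : (Finset.univ.filter (fun x : Fin (2*k+(k+1)) =>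
      k ≤ (x : ℕ) ∧ (x : ℕ) < 2*k + a ∧ (x : ℕ) ∉ P)) =
      ((Finset.Ico k (2*k+a)) \ P).attachFin (by
        intro m hm
        rw [Finset.mem_sdiff, Finset.mem_Ico] at hm
        omega) := by
    ext x
    rw [Finset.mem_attachFin, Finset.mem_sdiff, Finset.mem_Ico]
    simp only [Finset.mem_filter, Finset.mem_univ, true_and]
    tauto
  have hQ3card : (Finset.univ.filter (fun x : Fin (2*k+(k+1)) =>
      k ≤ (x : ℕ) ∧ (x : ℕ) < 2*k + a ∧ (x : ℕ) ∉ P)).card = k := by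
    rw [hQ3eq, Finset.card_attachFin, Finset.card_sdiff_of_subset hPsub, Nat.card_Ico]
    omega
  have hQ4card : (Finset.univ.filter (fun x : Fin (2*k+(k+1)) =>
      2*k + a ≤ (x : ℕ))).card = k + 1 - a := by
    rw [card_pos_ge (2*k+a) (by omega)]
    omega
  -- agreement on each class
  have e1 : ∀ x ∈ Finset.univ.filter (fun x : Fin (2*k+(k+1)) => (x : ℕ) < k),
      π x = ρ x := by
    apply eqOn_strictMonoOn (by rw [cW1, hQ1card])
    · intro x hx y hy hxy
      simp only [Finset.mem_filter, Finset.mem_univ, true_and] at hx hy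
      exact mono1 x y hxy hy
    · intro x hx y hy hxy
      simp only [Finset.mem_filter, Finset.mem_univ, true_and] at hx hy
      exact mono1' x y hxy hy
    · intro x hx
      simp only [Finset.mem_filter, Finset.mem_univ, true_and] at hx
      rw [Finset.mem_attachFin, Finset.mem_sdiff, Finset.mem_Icc]
      obtain ⟨h1, h2, h3⟩ := img1 x hx
      exact ⟨⟨h1, h2⟩, h3⟩
    · intro x hx
      simp only [Finset.mem_filter, Finset.mem_univ, true_and] at hx
      rw [Finset.mem_attachFin, Finset.mem_sdiff, Finset.mem_Icc]
      obtain ⟨h1, h2, h3⟩ := img1' x hx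
      exact ⟨⟨h1, h2⟩, h3⟩
  have e2 : ∀ x ∈ Finset.univ.filter (fun x : Fin (2*k+(k+1)) => (x : ℕ) ∈ P),
      π x = ρ x := by
    apply eqOn_strictMonoOn (by rw [cW2, hQ2card])
    · intro x hx y hy hxy
      simp only [Finset.mem_filter, Finset.mem_univ, true_and] at hx hy
      exact mono2 x y hxy hx hy
    · intro x hx y hy hxy
      simp only [Finset.mem_filter, Finset.mem_univ, true_and] at hx hy
      exact mono2' x y hxy hx hy
    · intro x hx
      simp only [Finset.mem_filter, Finset.mem_univ, true_and] at hx
      rw [Finset.mem_attachFin, Finset.mem_Icc]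
      have h1 := img2 x hx
      have h2 := (π x).isLt
      omega
    · intro x hx
      simp only [Finset.mem_filter, Finset.mem_univ, true_and] at hx
      rw [Finset.mem_attachFin, Finset.mem_Icc]
      have h1 := img2' x hx
      have h2 := (ρ x).isLt
      omega
  have e3 : ∀ x ∈ Finset.univ.filter (fun x : Fin (2*k+(k+1)) =>
      k ≤ (x : ℕ) ∧ (x : ℕ) < 2*k + a ∧ (x : ℕ) ∉ P), π x = ρ x := by
    apply eqOn_strictMonoOn (by rw [cW3, hQ3card])
    · intro x hx y hy hxy
      simp only [Finset.mem_filter, Finset.mem_univ, true_and] at hx hy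
      exact mono3 x y hxy (img3 x hx.1 hx.2.1 hx.2.2) (img3 y hy.1 hy.2.1 hy.2.2)
    · intro x hx y hy hxy
      simp only [Finset.mem_filter, Finset.mem_univ, true_and] at hx hy
      exact mono3' x y hxy (img3' x hx.1 hx.2.1 hx.2.2) (img3' y hy.1 hy.2.1 hy.2.2)
    · intro x hx
      simp only [Finset.mem_filter, Finset.mem_univ, true_and] at hx
      rw [Finset.mem_attachFin, Finset.mem_range]
      exact img3 x hx.1 hx.2.1 hx.2.2
    · intro x hx
      simp only [Finset.mem_filter, Finset.mem_univ, true_and] at hx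
      rw [Finset.mem_attachFin, Finset.mem_range]
      exact img3' x hx.1 hx.2.1 hx.2.2
  have e4 : ∀ x ∈ Finset.univ.filter (fun x : Fin (2*k+(k+1)) => 2*k + a ≤ (x : ℕ)),
      π x = ρ x := by
    apply eqOn_strictMonoOn (by rw [cW4, hQ4card])
    · intro x hx y hy hxy
      simp only [Finset.mem_filter, Finset.mem_univ, true_and] at hx hy
      exact mono4 x y hxy hx
    · intro x hx y hy hxy
      simp only [Finset.mem_filter, Finset.mem_univ, true_and] at hx hy
      exact mono4' x y hxy hx
    · intro x hx
      simp only [Finset.mem_filter, Finset.mem_univ, true_and] at hx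
      rw [Finset.mem_attachFin]
      exact img4 x hx
    · intro x hx
      simp only [Finset.mem_filter, Finset.mem_univ, true_and] at hx
      rw [Finset.mem_attachFin]
      exact img4' x hx
  apply Equiv.ext
  intro x
  by_cases c1 : (x : ℕ) < k
  · exact e1 x (by simp only [Finset.mem_filter, Finset.mem_univ, true_and]; exact c1)
  by_cases c2 : (x : ℕ) ∈ P
  · exact e2 x (by simp only [Finset.mem_filter, Finset.mem_univ, true_and]; exact c2)
  by_cases c3 : (x : ℕ) < 2*k + a
  · refine e3 x ?_
    simp only [Finset.mem_filter, Finset.mem_univ, true_and]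
    exact ⟨not_lt.1 c1, c3, c2⟩
  · refine e4 x ?_
    simp only [Finset.mem_filter, Finset.mem_univ, true_and]
    exact not_lt.1 c3

lemma code_unique (hk : 0 < k) {P C P' C' : Finset ℕ}
    (h1 : Stairs k P C π) (h2 : Stairs k P' C' π) : P = P' ∧ C = C' := by
  classical
  -- intrinsic characterisation of P
  have key : ∀ (P0 C0 : Finset ℕ), Stairs k P0 C0 π → ∀ m : ℕ,
      (m ∈ P0 ↔ k ≤ m ∧ m ≤ 2*k ∧
        ∃ h : m < 2*k+(k+1), 2*k ≤ (π ⟨m, h⟩ : ℕ)) := by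
    intro P0 C0 hst m
    obtain ⟨hP, hC, hcard, img1, img2, img3, img4, mono1, mono2, mono3, mono4⟩ := hst
    have hCk : ∀ m' ∈ C0, k ≤ m' ∧ m' ≤ 2*k := fun m' hm => Finset.mem_Icc.1 (hC hm)
    constructor
    · intro hm
      have hb := Finset.mem_Icc.1 (hP hm)
      refine ⟨hb.1, hb.2, by omega, ?_⟩
      have := img2 ⟨m, by omega⟩ hm
      omega
    · rintro ⟨hb1, hb2, hlt, hval⟩
      by_contra hm
      rcases Nat.lt_or_ge m (2*k + P0.card) with h' | h'
      · have := img3 ⟨m, hlt⟩ hb1 h' hm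
        omega
      · have ha0 : P0.card = 0 := by omega
        have hm2k : m = 2*k := by omega
        have hj : (⟨m, hlt⟩ : Fin (2*k+(k+1))) < ⟨2*k+1, by omega⟩ := by
          rw [Fin.lt_def]
          show m < 2*k+1
          omega
        have hmono := mono4 ⟨m, hlt⟩ ⟨2*k+1, by omega⟩ hj (by show 2*k + P0.card ≤ m; omega)
        have hC1 := img4 ⟨2*k+1, by omega⟩ (by show 2*k + P0.card ≤ 2*k+1; omega)
        have hC2 := (hCk _ hC1).2
        rw [Fin.lt_def] at hmono
        omega
  have hPP : P = P' := by
    ext m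
    rw [key P C h1 m, key P' C' h2 m]
  -- intrinsic characterisation of C
  have key2 : ∀ (P0 C0 : Finset ℕ), Stairs k P0 C0 π →
      C0 = (Finset.univ.filter (fun x : Fin (2*k+(k+1)) =>
        2*k + P0.card ≤ (x : ℕ))).image (fun x => (π x : ℕ)) := by
    intro P0 C0 hst
    obtain ⟨hP, hC, hcard, img1, img2, img3, img4, mono1, mono2, mono3, mono4⟩ := hst
    symm
    apply Finset.eq_of_subset_of_card_le
    · intro m hm
      simp only [Finset.mem_image, Finset.mem_filter, Finset.mem_univ, true_and] at hm
      obtain ⟨x, hx1, rfl⟩ := hm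
      exact img4 x hx1
    · have himg : ((Finset.univ.filter (fun x : Fin (2*k+(k+1)) =>
          2*k + P0.card ≤ (x : ℕ))).image (fun x => (π x : ℕ))).card = k + 1 - P0.card := by
        rw [Finset.card_image_of_injOn (fun x _ y _ hxy => π.injective (Fin.ext hxy)),
          card_pos_ge (2*k + P0.card) (by omega)]
        omega
      rw [himg]
      omega
  have hCC : C = C' := by
    rw [key2 P C h1, key2 P' C' h2, hPP]
  exact ⟨hPP, hCC⟩

end Uniqueness

section Final

def upmap (k : ℕ) : Fin (k+1) ↪ ℕ :=
  ⟨fun x => k + (x : ℕ), by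
    intro a b h
    simp only at h
    exact Fin.ext (by omega)⟩

lemma up_sub (k : ℕ) (s : Finset (Fin (k+1))) :
    s.map (upmap k) ⊆ Finset.Icc k (2*k) := by
  intro m hm
  rw [Finset.mem_map] at hm
  obtain ⟨x, _, rfl⟩ := hm
  have : (x : ℕ) < k + 1 := x.isLt
  rw [Finset.mem_Icc]
  show k ≤ k + (x : ℕ) ∧ k + (x : ℕ) ≤ 2*k
  omega

lemma up_down (k : ℕ) (S : Finset ℕ) (hS : S ⊆ Finset.Icc k (2*k)) :
    (Finset.univ.filter (fun x : Fin (k+1) => k + (x : ℕ) ∈ S)).map (upmap k) = S := by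
  ext m
  rw [Finset.mem_map]
  constructor
  · rintro ⟨x, hx, rfl⟩
    simp only [Finset.mem_filter, Finset.mem_univ, true_and] at hx
    exact hx
  · intro hm
    have hb := Finset.mem_Icc.1 (hS hm)
    refine ⟨⟨m - k, by omega⟩, ?_, ?_⟩
    · simp only [Finset.mem_filter, Finset.mem_univ, true_and]
      show k + (m - k) ∈ S
      have : k + (m - k) = m := by omega
      rw [this]
      exact hm
    · show k + (m - k) = m
      omega

end Final

end CountKGood

/-- For `ℓ = k + 1` as well, the number of `k`-good permutations of length
`2k + ℓ` is `C(2ℓ, ℓ) = C(2k+2, k+1)`. -/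
theorem count_kGood_succ (k : ℕ) (hk : 0 < k) :
    Nat.card {π : Equiv.Perm (Fin (2 * k + (k + 1))) // ¬ HasDecSeq π 3 ∧ KGood k π} =
      Nat.choose (2 * (k + 1)) (k + 1) := by
  classical
  open CountKGood Finset in
  have hFex : ∀ s : {s : Finset (Fin (k+1) ⊕ Fin (k+1)) // s.card = k+1},
      ∃ π : Equiv.Perm (Fin (2*k+(k+1))),
      Stairs k ((s.1.toLeft).map (upmap k)) ((s.1.toRight).map (upmap k)) π := by
    intro s
    apply existence hk
    · exact up_sub k _
    · exact up_sub k _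
    · rw [Finset.card_map, Finset.card_map, Finset.card_toLeft_add_card_toRight, s.2]
  open CountKGood Finset in
  have hmain : Nat.card {s : Finset (Fin (k+1) ⊕ Fin (k+1)) // s.card = k+1} =
      Nat.card {π : Equiv.Perm (Fin (2 * k + (k + 1))) // ¬ HasDecSeq π 3 ∧ KGood k π} := by
    apply Nat.card_eq_of_bijective
      (fun s => (⟨(hFex s).choose, stairs_no321 hk (hFex s).choose_spec,
        stairs_kgood hk (hFex s).choose_spec⟩ :
        {π : Equiv.Perm (Fin (2 * k + (k + 1))) // ¬ HasDecSeq π 3 ∧ KGood k π}))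
    constructor
    · intro s1 s2 h
      have h' : (hFex s1).choose = (hFex s2).choose := congrArg Subtype.val h
      have st1 := (hFex s1).choose_spec
      have st2 := (hFex s2).choose_spec
      rw [h'] at st1
      obtain ⟨hPeq, hCeq⟩ := code_unique hk st1 st2
      have hL : s1.1.toLeft = s2.1.toLeft := Finset.map_injective _ hPeq
      have hR : s1.1.toRight = s2.1.toRight := Finset.map_injective _ hCeq
      apply Subtype.ext
      calc s1.1 = s1.1.toLeft.disjSum s1.1.toRight := Finset.toLeft_disjSum_toRight.symm
        _ = s2.1.toLeft.disjSum s2.1.toRight := by rw [hL, hR]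
        _ = s2.1 := Finset.toLeft_disjSum_toRight
    · rintro ⟨π, hd, hg⟩
      obtain ⟨P, C, hst⟩ := completeness hk hd hg
      have hP : P ⊆ Finset.Icc k (2*k) := hst.1
      have hC : C ⊆ Finset.Icc k (2*k) := hst.2.1
      have hcards : P.card + C.card = k + 1 := hst.2.2.1
      have hL : (Finset.univ.filter (fun x : Fin (k+1) => k + (x : ℕ) ∈ P)).map (upmap k)
          = P := up_down k P hP
      have hR : (Finset.univ.filter (fun x : Fin (k+1) => k + (x : ℕ) ∈ C)).map (upmap k)
          = C := up_down k C hC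
      have hcardS : ((Finset.univ.filter (fun x : Fin (k+1) => k + (x : ℕ) ∈ P)).disjSum
          (Finset.univ.filter (fun x : Fin (k+1) => k + (x : ℕ) ∈ C))).card = k + 1 := by
        rw [Finset.card_disjSum]
        have e1 : (Finset.univ.filter (fun x : Fin (k+1) => k + (x : ℕ) ∈ P)).card
            = P.card := by
          have h := congrArg Finset.card hL
          rwa [Finset.card_map] at h
        have e2 : (Finset.univ.filter (fun x : Fin (k+1) => k + (x : ℕ) ∈ C)).card
            = C.card := by
          have h := congrArg Finset.card hR
          rwa [Finset.card_map] at h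
        omega
      set s0 : {s : Finset (Fin (k+1) ⊕ Fin (k+1)) // s.card = k+1} :=
        ⟨(Finset.univ.filter (fun x : Fin (k+1) => k + (x : ℕ) ∈ P)).disjSum
          (Finset.univ.filter (fun x : Fin (k+1) => k + (x : ℕ) ∈ C)), hcardS⟩ with hs0
      refine ⟨s0, ?_⟩
      have st' := (hFex s0).choose_spec
      have hst2 : Stairs k ((s0.1.toLeft).map (upmap k)) ((s0.1.toRight).map (upmap k)) π := by
        rw [hs0]
        simp only [Finset.toLeft_disjSum, Finset.toRight_disjSum]
        rw [hL, hR]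
        exact hst
      refine Subtype.ext ?_
      show (hFex s0).choose = π
      exact stairs_unique hk st' hst2
  rw [← hmain, Nat.card_eq_fintype_card, Fintype.card_finset_len]
  have : Fintype.card (Fin (k+1) ⊕ Fin (k+1)) = 2 * (k+1) := by
    rw [Fintype.card_sum, Fintype.card_fin]
    omega
  rw [this]
end
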